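/- arXiv:1605.06360 — 11 statements merged into one kernel-verified Lean document; each statement's English description precedes it below -/
import Mathlib

section
/- If G is a finite simple graph with m edges such that m ≤ C(k,2) for some integer k ≥ 1, then λ₁(G) ≤ k − 1. -/
open SimpleGraph Finset Matrix

/-- The largest eigenvalue of the adjacency matrix of a finite graph. -/
noncomputable def lam1 {V : Type*} [Fintype V] [DecidableEq V] (G : SimpleGraph V)
    [DecidableRel G.Adj] : ℝ :=
  sSup {μ : ℝ | Module.End.HasEigenvalue (Matrix.toLin' (G.adjMatrix ℝ)) μ}

/-- The hypercube graph `Q_d`, with vertices the subsets of `[d]`. -/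
def cube (d : ℕ) : SimpleGraph (Finset (Fin d)) where
  Adj S T := (symmDiff S T).card = 1
  symm := ⟨fun S T h => by simpa [symmDiff_comm] using h⟩
  loopless := ⟨fun S h => by simp [symmDiff_self] at h⟩

instance cubeAdjDec (d : ℕ) : DecidableRel (cube d).Adj :=
  fun S T => inferInstanceAs (Decidable ((symmDiff S T).card = 1))

instance cubeInduceAdjDec (d : ℕ) (s : Set (Finset (Fin d))) :
    DecidableRel ((cube d).induce s).Adj :=
  fun a b => cubeAdjDec d a b

theorem brualdi_hoffman {V : Type*} [Fintype V] [DecidableEq V]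
    (G : SimpleGraph V) [DecidableRel G.Adj] (k : ℕ) (hk : 1 ≤ k)
    (hm : G.edgeFinset.card ≤ k.choose 2) :
    lam1 G ≤ (k : ℝ) - 1 := by
  have hk1 : (0:ℝ) ≤ (k:ℝ) - 1 := by
    have : (1:ℝ) ≤ (k:ℝ) := by exact_mod_cast hk
    linarith
  apply Real.sSup_le _ hk1
  rintro μ hμ
  rcases le_or_gt μ 0 with hμ0 | hμ0
  · linarith
  obtain ⟨x, hx⟩ := hμ.exists_hasEigenvector
  have hx0 : x ≠ 0 := hx.2
  have heq : (G.adjMatrix ℝ) *ᵥ x = μ • x := by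
    have := hx.apply_eq_smul
    simpa [Matrix.toLin'_apply] using this
  have hAx : ∀ v, ∑ w ∈ G.neighborFinset v, x w = μ * x v := by
    intro v
    have := congrFun heq v
    simpa using this
  -- nonempty V
  obtain ⟨w0, hw0⟩ : ∃ w, x w ≠ 0 := by
    by_contra h
    push_neg at h
    exact hx0 (funext h)
  have hne : (univ : Finset V).Nonempty := ⟨w0, mem_univ _⟩
  obtain ⟨u, -, hu⟩ := Finset.exists_max_image univ (fun v => |x v|) hne
  have hu' : ∀ v, |x v| ≤ |x u| := fun v => hu v (mem_univ v)
  have hxu : 0 < |x u| := lt_of_lt_of_le (abs_pos.mpr hw0) (hu' w0)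
  -- μ ≤ deg u
  have h1 : μ ≤ (G.degree u : ℝ) := by
    have : μ * |x u| ≤ (G.degree u : ℝ) * |x u| := by
      calc μ * |x u| = |μ * x u| := by
            rw [abs_mul, abs_of_pos hμ0]
        _ = |∑ w ∈ G.neighborFinset u, x w| := by rw [hAx u]
        _ ≤ ∑ w ∈ G.neighborFinset u, |x w| := Finset.abs_sum_le_sum_abs _ _
        _ ≤ ∑ _w ∈ G.neighborFinset u, |x u| := Finset.sum_le_sum (fun w _ => hu' w)
        _ = (G.degree u : ℝ) * |x u| := by
            rw [Finset.sum_const, nsmul_eq_mul, SimpleGraph.card_neighborFinset_eq_degree]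
    exact le_of_mul_le_mul_right this hxu
  -- μ² ≤ ∑_{v ~ u} deg v
  have h2 : μ ^ 2 ≤ ((∑ v ∈ G.neighborFinset u, G.degree v : ℕ) : ℝ) := by
    have key : μ ^ 2 * x u = ∑ v ∈ G.neighborFinset u, ∑ w ∈ G.neighborFinset v, x w := by
      rw [Finset.sum_congr rfl (fun v _ => hAx v), ← Finset.mul_sum, hAx u]
      ring
    have : μ ^ 2 * |x u| ≤ ((∑ v ∈ G.neighborFinset u, G.degree v : ℕ) : ℝ) * |x u| := by
      calc μ ^ 2 * |x u| = |μ ^ 2 * x u| := by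
            rw [abs_mul, abs_of_nonneg (sq_nonneg μ)]
        _ = |∑ v ∈ G.neighborFinset u, ∑ w ∈ G.neighborFinset v, x w| := by rw [key]
        _ ≤ ∑ v ∈ G.neighborFinset u, |∑ w ∈ G.neighborFinset v, x w| :=
            Finset.abs_sum_le_sum_abs _ _
        _ ≤ ∑ v ∈ G.neighborFinset u, ∑ w ∈ G.neighborFinset v, |x w| :=
            Finset.sum_le_sum (fun v _ => Finset.abs_sum_le_sum_abs _ _)
        _ ≤ ∑ v ∈ G.neighborFinset u, ∑ _w ∈ G.neighborFinset v, |x u| :=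
            Finset.sum_le_sum (fun v _ => Finset.sum_le_sum (fun w _ => hu' w))
        _ = ((∑ v ∈ G.neighborFinset u, G.degree v : ℕ) : ℝ) * |x u| := by
            push_cast
            rw [Finset.sum_mul]
            refine Finset.sum_congr rfl (fun v _ => ?_)
            rw [Finset.sum_const, nsmul_eq_mul, SimpleGraph.card_neighborFinset_eq_degree]
    exact le_of_mul_le_mul_right this hxu
  -- combinatorial bound
  have h3 : (∑ v ∈ G.neighborFinset u, G.degree v) + G.degree u ≤ 2 * G.edgeFinset.card := by
    rw [← G.sum_degrees_eq_twice_card_edges]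
    have hnotmem : u ∉ G.neighborFinset u := by simp
    calc (∑ v ∈ G.neighborFinset u, G.degree v) + G.degree u
        = ∑ v ∈ insert u (G.neighborFinset u), G.degree v := by
          rw [Finset.sum_insert hnotmem]; ring
      _ ≤ ∑ v, G.degree v :=
          Finset.sum_le_sum_of_subset (Finset.subset_univ _)
  have h4 : 2 * G.edgeFinset.card ≤ k * (k - 1) := by
    calc 2 * G.edgeFinset.card ≤ 2 * k.choose 2 := by omega
      _ = k * (k-1) := by
          rw [Nat.choose_two_right]
          have : 2 ∣ k * (k-1) := (Nat.even_mul_pred_self k).two_dvd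
          omega
  -- combine
  have h5 : μ ^ 2 + μ ≤ (k : ℝ) * ((k:ℝ) - 1) := by
    have hd : ((∑ v ∈ G.neighborFinset u, G.degree v : ℕ) : ℝ) + (G.degree u : ℝ)
        ≤ (k:ℝ) * ((k:ℝ) - 1) := by
      have : ((∑ v ∈ G.neighborFinset u, G.degree v) + G.degree u : ℕ) ≤ k * (k-1) :=
        le_trans h3 h4
      have hcast : ((k * (k-1) : ℕ) : ℝ) = (k:ℝ) * ((k:ℝ) - 1) := by
        have h1k : (1:ℕ) ≤ k := hk
        push_cast [Nat.cast_sub h1k]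
        ring
      calc ((∑ v ∈ G.neighborFinset u, G.degree v : ℕ) : ℝ) + (G.degree u : ℝ)
          = (((∑ v ∈ G.neighborFinset u, G.degree v) + G.degree u : ℕ) : ℝ) := by push_cast; ring
        _ ≤ ((k * (k-1) : ℕ) : ℝ) := by exact_mod_cast this
        _ = _ := hcast
    linarith
  nlinarith [sq_nonneg (μ - ((k:ℝ) - 1))]
end

section
/- If G is a finite simple graph with m edges, then λ₁(G) ≤ (−1 + √(8m+1))/2. -/
open SimpleGraph Finset Matrix

theorem stanley_bound' {V : Type*} [Fintype V] [DecidableEq V]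
    (G : SimpleGraph V) [DecidableRel G.Adj] :
    sSup {μ : ℝ | Module.End.HasEigenvalue (Matrix.toLin' (G.adjMatrix ℝ)) μ}
      ≤ (-1 + Real.sqrt (8 * (G.edgeFinset.card : ℝ) + 1)) / 2 := by
  have hm0 : (0:ℝ) ≤ 8 * (G.edgeFinset.card : ℝ) + 1 := by positivity
  have hs0 : 0 ≤ Real.sqrt (8 * (G.edgeFinset.card : ℝ) + 1) := Real.sqrt_nonneg _
  have hs2 : (Real.sqrt (8 * (G.edgeFinset.card : ℝ) + 1)) ^ 2
      = 8 * (G.edgeFinset.card : ℝ) + 1 := Real.sq_sqrt hm0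
  have h1s : (1:ℝ) ≤ Real.sqrt (8 * (G.edgeFinset.card : ℝ) + 1) := by
    nlinarith [Nat.cast_nonneg (α := ℝ) G.edgeFinset.card]
  have hB : (0:ℝ) ≤ (-1 + Real.sqrt (8 * (G.edgeFinset.card : ℝ) + 1)) / 2 := by linarith
  apply Real.sSup_le _ hB
  rintro μ hμ
  have key : μ ^ 2 + μ ≤ 2 * (G.edgeFinset.card : ℝ) := by
    obtain ⟨x, hx⟩ := Module.End.HasEigenvalue.exists_hasEigenvector hμ
    have hxe : ∀ u, μ * x u = ∑ w ∈ G.neighborFinset u, x w := by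
      intro u
      have h2 : (G.adjMatrix ℝ) *ᵥ x = μ • x := by
        rw [← Matrix.toLin'_apply]; exact hx.apply_eq_smul
      have h3 := congrFun h2 u
      rw [SimpleGraph.adjMatrix_mulVec_apply] at h3
      simpa [mul_comm] using h3.symm
    -- V is nonempty
    obtain ⟨v0, hv0⟩ : ∃ v0, x v0 ≠ 0 := Function.ne_iff.mp hx.2
    have : Nonempty V := ⟨v0⟩
    obtain ⟨v, -, hv⟩ := Finset.exists_max_image Finset.univ (fun u => |x u|)
      Finset.univ_nonempty
    simp only [Finset.mem_univ, forall_true_left, true_implies] at hv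
    have hvpos : 0 < |x v| := lt_of_lt_of_le (abs_pos.mpr hv0) (hv v0)
    -- replace x by a vector with positive max attained at v
    obtain ⟨y, hye, hyv, hyb⟩ : ∃ y : V → ℝ,
        (∀ u, μ * y u = ∑ w ∈ G.neighborFinset u, y w) ∧ 0 < y v ∧ ∀ u, y u ≤ y v := by
      rcases le_or_gt 0 (x v) with h | h
      · refine ⟨x, hxe, ?_, fun u => ?_⟩
        · rwa [abs_of_nonneg h] at hvpos
        · calc x u ≤ |x u| := le_abs_self _
            _ ≤ |x v| := hv u
            _ = x v := abs_of_nonneg h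
      · refine ⟨-x, fun u => ?_, ?_, fun u => ?_⟩
        · simp only [Pi.neg_apply, mul_neg, Finset.sum_neg_distrib, hxe u]
        · simpa [abs_of_neg h] using hvpos
        · calc (-x) u ≤ |x u| := by simpa using neg_le_abs (x u)
            _ ≤ |x v| := hv u
            _ = (-x) v := by simp [abs_of_neg h]
    -- the two local estimates
    have h1 : μ * y v ≤ (G.degree v : ℝ) * y v := by
      rw [hye v]
      calc ∑ w ∈ G.neighborFinset v, y w ≤ ∑ _w ∈ G.neighborFinset v, y v :=
            Finset.sum_le_sum (fun w _ => hyb w)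
        _ = (G.degree v : ℝ) * y v := by
            rw [Finset.sum_const, SimpleGraph.card_neighborFinset_eq_degree, nsmul_eq_mul]
    have h2 : μ ^ 2 * y v ≤ (∑ u ∈ G.neighborFinset v, (G.degree u : ℝ)) * y v := by
      have : μ ^ 2 * y v = ∑ u ∈ G.neighborFinset v, ∑ w ∈ G.neighborFinset u, y w := by
        rw [pow_two, mul_assoc, hye v, Finset.mul_sum]
        exact Finset.sum_congr rfl (fun u _ => hye u)
      rw [this, Finset.sum_mul]
      refine Finset.sum_le_sum (fun u _ => ?_)
      calc ∑ w ∈ G.neighborFinset u, y w ≤ ∑ _w ∈ G.neighborFinset u, y v :=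
            Finset.sum_le_sum (fun w _ => hyb w)
        _ = (G.degree u : ℝ) * y v := by
            rw [Finset.sum_const, SimpleGraph.card_neighborFinset_eq_degree, nsmul_eq_mul]
    -- combinatorial bound
    have h3 : (∑ u ∈ G.neighborFinset v, (G.degree u : ℝ)) + (G.degree v : ℝ)
        ≤ 2 * (G.edgeFinset.card : ℝ) := by
      have hvnot : v ∉ G.neighborFinset v := by
        exact G.notMem_neighborFinset_self v
      have hsub : G.neighborFinset v ⊆ Finset.univ := Finset.subset_univ _
      have hsplit : (∑ u ∈ Finset.univ \ G.neighborFinset v, (G.degree u : ℝ))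
          + ∑ u ∈ G.neighborFinset v, (G.degree u : ℝ) = ∑ u : V, (G.degree u : ℝ) :=
        Finset.sum_sdiff hsub
      have hdv : (G.degree v : ℝ) ≤ ∑ u ∈ Finset.univ \ G.neighborFinset v, (G.degree u : ℝ) :=
        Finset.single_le_sum (f := fun u => (G.degree u : ℝ)) (fun u _ => Nat.cast_nonneg _)
          (Finset.mem_sdiff.mpr ⟨Finset.mem_univ v, hvnot⟩)
      have hhs : ∑ u : V, (G.degree u : ℝ) = 2 * (G.edgeFinset.card : ℝ) := by
        rw [← Nat.cast_sum]
        norm_cast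
        exact G.sum_degrees_eq_twice_card_edges
      linarith
    nlinarith [h1, h2, h3, hyv, mul_le_mul_of_nonneg_right h3 (le_of_lt hyv)]
  rcases le_or_gt μ 0 with h | h
  · linarith
  · nlinarith [key, hs2, hs0, h]

theorem stanley_bound {V : Type*} [Fintype V] [DecidableEq V]
    (G : SimpleGraph V) [DecidableRel G.Adj] :
    lam1 G ≤ (-1 + Real.sqrt (8 * (G.edgeFinset.card : ℝ) + 1)) / 2 := by
  unfold lam1
  exact stanley_bound' G
end

section
/- If G is a triangle-free graph with m edges, then λ₁(G) ≤ √m. -/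
open SimpleGraph Finset Matrix

private lemma nosal_aux {V : Type*} [Fintype V] [DecidableEq V]
    (G : SimpleGraph V) [DecidableRel G.Adj] (htf : G.CliqueFree 3) (μ : ℝ)
    (hμ : Module.End.HasEigenvalue (Matrix.toLin' (G.adjMatrix ℝ)) μ) :
    μ ≤ Real.sqrt (G.edgeFinset.card : ℝ) := by
  classical
  obtain ⟨x, hx⟩ := hμ.exists_hasEigenvector
  have hx0 : x ≠ 0 := hx.right
  have hxe : (G.adjMatrix ℝ).mulVec x = μ • x := by
    rw [← Matrix.toLin'_apply]; exact hx.apply_eq_smul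
  rcases le_or_gt μ 0 with hμ0 | hμ0
  · exact hμ0.trans (Real.sqrt_nonneg _)
  have hne : Nonempty V := by
    by_contra h
    exact hx0 (funext fun v => absurd ⟨v⟩ h)
  obtain ⟨u, -, hu⟩ := Finset.exists_max_image (Finset.univ : Finset V) (fun v => |x v|)
    ⟨Classical.arbitrary V, Finset.mem_univ _⟩
  have hcu : 0 < |x u| := by
    obtain ⟨v, hv⟩ := Function.ne_iff.mp hx0
    exact lt_of_lt_of_le (abs_pos.mpr hv) (hu v (Finset.mem_univ v))
  set A := G.adjMatrix ℝ with hA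
  set P : Finset (V × V) := Finset.univ.filter (fun p => G.Adj u p.1 ∧ G.Adj p.1 p.2) with hP
  have h2 : A.mulVec (A.mulVec x) u = μ ^ 2 * x u := by
    rw [hxe, Matrix.mulVec_smul, hxe]
    simp [smul_smul]
    ring
  have hsum : A.mulVec (A.mulVec x) u = ∑ v, ∑ w, A u v * (A v w * x w) := by
    simp [Matrix.mulVec, dotProduct, Finset.mul_sum]
  have hAnn : ∀ i j, (0:ℝ) ≤ A i j := fun i j => by
    rw [hA]; simp [SimpleGraph.adjMatrix_apply]; positivity
  have key : μ ^ 2 * |x u| ≤ (P.card : ℝ) * |x u| := by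
    have h1 : μ ^ 2 * |x u| = |μ ^ 2 * x u| := by
      rw [abs_mul, abs_of_nonneg (sq_nonneg μ)]
    rw [h1, ← h2, hsum]
    calc |∑ v, ∑ w, A u v * (A v w * x w)|
        ≤ ∑ v, ∑ w, |A u v * (A v w * x w)| := by
          refine (Finset.abs_sum_le_sum_abs _ _).trans ?_
          exact Finset.sum_le_sum fun v _ => Finset.abs_sum_le_sum_abs _ _
      _ ≤ ∑ v, ∑ w, A u v * (A v w * |x u|) := by
          refine Finset.sum_le_sum fun v _ => Finset.sum_le_sum fun w _ => ?_
          rw [abs_mul, abs_mul, abs_of_nonneg (hAnn u v), abs_of_nonneg (hAnn v w)]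
          exact mul_le_mul_of_nonneg_left
            (mul_le_mul_of_nonneg_left (hu w (Finset.mem_univ w)) (hAnn v w)) (hAnn u v)
      _ = (P.card : ℝ) * |x u| := by
          rw [hP]
          rw [Finset.card_filter]
          push_cast
          rw [Finset.sum_mul, ← Finset.univ_product_univ, Finset.sum_product]
          refine Finset.sum_congr rfl fun v _ => Finset.sum_congr rfl fun w _ => ?_
          rw [hA]
          by_cases h1 : G.Adj u v <;> by_cases h2 : G.Adj v w <;>
            simp [h1, h2]
  have hPm : (P.card : ℝ) ≤ (G.edgeFinset.card : ℝ) := by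
    have : P.card ≤ G.edgeFinset.card := by
      apply Finset.card_le_card_of_injOn (fun p : V × V => s(p.1, p.2))
      · intro p hp
        rw [Finset.mem_coe] at hp ⊢
        rw [hP, Finset.mem_filter] at hp
        rw [SimpleGraph.mem_edgeFinset]
        exact hp.2.2
      · intro p hp q hq hpq
        rw [Finset.mem_coe, hP, Finset.mem_filter] at hp hq
        obtain ⟨-, hp⟩ := hp
        obtain ⟨-, hq⟩ := hq
        rcases Sym2.mk_eq_mk_iff.mp hpq with h | h
        · exact h
        · exfalso
          have hadj1 : G.Adj u p.1 := hp.1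
          have hadj2 : G.Adj p.1 p.2 := hp.2
          have hadj3 : G.Adj u p.2 := by rw [h]; exact hq.1
          exact htf {u, p.1, p.2} (SimpleGraph.is3Clique_triple_iff.mpr ⟨hadj1, hadj3, hadj2⟩)
    exact_mod_cast this
  have hsq : μ ^ 2 ≤ (G.edgeFinset.card : ℝ) := by
    have := (mul_le_mul_iff_of_pos_right hcu).mp key
    linarith
  rw [show μ = √(μ ^ 2) by rw [Real.sqrt_sq hμ0.le]]
  exact Real.sqrt_le_sqrt hsq

theorem nosal_bound {V : Type*} [Fintype V] [DecidableEq V]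
    (G : SimpleGraph V) [DecidableRel G.Adj] (htf : G.CliqueFree 3) :
    lam1 G ≤ Real.sqrt (G.edgeFinset.card : ℝ) := by
  exact Real.sSup_le (fun μ hμ => nosal_aux G htf μ hμ) (Real.sqrt_nonneg _)
end

section
/- Let s(G) denote the maximum over vertices u of the sum of the degrees of vertices adjacent to u. Then λ₁(G) ≤ √(s(G)). -/
open SimpleGraph Finset Matrix

lemma eig_sq_le {V : Type*} [Fintype V] [DecidableEq V]
    (G : SimpleGraph V) [DecidableRel G.Adj] (μ : ℝ)
    (h : Module.End.HasEigenvalue (Matrix.toLin' (G.adjMatrix ℝ)) μ) :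
    μ ^ 2 ≤ ((Finset.univ.sup
      (fun u => ∑ v ∈ G.neighborFinset u, G.degree v) : ℕ) : ℝ) := by
  obtain ⟨x, hx⟩ := h.exists_hasEigenvector
  have hAx : G.adjMatrix ℝ *ᵥ x = μ • x := by
    have := hx.apply_eq_smul
    simpa [Matrix.toLin'_apply] using this
  have hx0 : x ≠ 0 := hx.right
  have hne : (Finset.univ : Finset V).Nonempty := by
    rcases Function.ne_iff.mp hx0 with ⟨v, -⟩
    exact ⟨v, Finset.mem_univ v⟩
  obtain ⟨u, -, hu⟩ := Finset.exists_max_image Finset.univ (fun v => |x v|) hne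
  have hxu : 0 < |x u| := by
    rcases Function.ne_iff.mp hx0 with ⟨v, hv⟩
    exact lt_of_lt_of_le (abs_pos.mpr hv) (hu v (Finset.mem_univ v))
  have h2 : G.adjMatrix ℝ *ᵥ (G.adjMatrix ℝ *ᵥ x) = (μ ^ 2) • x := by
    rw [hAx, Matrix.mulVec_smul, hAx, smul_smul, ← sq]
  have hcoord : μ ^ 2 * x u = ∑ w ∈ G.neighborFinset u, ∑ v ∈ G.neighborFinset w, x v := by
    have := congrFun h2 u
    rw [SimpleGraph.adjMatrix_mulVec_apply] at this
    simp only [SimpleGraph.adjMatrix_mulVec_apply] at this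
    simpa [Pi.smul_apply, smul_eq_mul] using this.symm
  set S : ℝ := ((Finset.univ.sup (fun u => ∑ v ∈ G.neighborFinset u, G.degree v) : ℕ) : ℝ)
  have hbound : μ ^ 2 * |x u| ≤ S * |x u| := by
    calc μ ^ 2 * |x u| = |μ ^ 2 * x u| := by
          rw [abs_mul, abs_of_nonneg (sq_nonneg μ)]
      _ ≤ ∑ w ∈ G.neighborFinset u, ∑ v ∈ G.neighborFinset w, |x v| := by
          rw [hcoord]
          refine (Finset.abs_sum_le_sum_abs _ _).trans ?_
          exact Finset.sum_le_sum fun w _ => Finset.abs_sum_le_sum_abs _ _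
      _ ≤ ∑ w ∈ G.neighborFinset u, (G.degree w : ℝ) * |x u| := by
          refine Finset.sum_le_sum fun w _ => ?_
          calc ∑ v ∈ G.neighborFinset w, |x v|
              ≤ ∑ v ∈ G.neighborFinset w, |x u| :=
                Finset.sum_le_sum fun v _ => hu v (Finset.mem_univ v)
            _ = (G.degree w : ℝ) * |x u| := by
                rw [Finset.sum_const, SimpleGraph.card_neighborFinset_eq_degree,
                  nsmul_eq_mul]
      _ = ((∑ w ∈ G.neighborFinset u, G.degree w : ℕ) : ℝ) * |x u| := by
          rw [Nat.cast_sum, Finset.sum_mul]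
      _ ≤ S * |x u| := by
          refine mul_le_mul_of_nonneg_right ?_ (abs_nonneg _)
          exact_mod_cast Nat.cast_le.mpr
            (Finset.le_sup (f := fun u => ∑ v ∈ G.neighborFinset u, G.degree v)
              (Finset.mem_univ u))
  exact le_of_mul_le_mul_right hbound hxu

theorem favaron_maheo_sacle {V : Type*} [Fintype V] [DecidableEq V]
    (G : SimpleGraph V) [DecidableRel G.Adj] :
    lam1 G ≤ Real.sqrt ((Finset.univ.sup
      (fun u => ∑ v ∈ G.neighborFinset u, G.degree v) : ℕ) : ℝ) := by
  unfold lam1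
  refine Real.sSup_le (fun μ hμ => ?_) (Real.sqrt_nonneg _)
  calc μ ≤ |μ| := le_abs_self μ
    _ = Real.sqrt (μ ^ 2) := (Real.sqrt_sq_eq_abs μ).symm
    _ ≤ _ := Real.sqrt_le_sqrt (eig_sq_le G μ hμ)
end

section
/- Let i ∈ [d] and let v ∈ ℝ^{V(Q_d)}. Define the compression C_{i,∅}(v) which, for each pair (S, S∪{i}) with i ∉ S, replaces (v_S, v_{S∪{i}}) by (max(v_S, v_{S∪{i}}), min(v_S, v_{S∪{i}})). Then ⟨A(Q_d) v, v⟩ ≤ ⟨A(Q_d) C_{i,∅}(v), C_{i,∅}(v)⟩. -/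
open SimpleGraph Finset Matrix

/-- The compression `C_{i,∅}`: for each pair `(S, S ∪ {i})` with `i ∉ S`,
the pair of values is rearranged so that the larger sits on `S`. -/
noncomputable def compDown (d : ℕ) (i : Fin d) (v : Finset (Fin d) → ℝ) :
    Finset (Fin d) → ℝ := fun S =>
  if i ∈ S then min (v (S.erase i)) (v S) else max (v S) (v (insert i S))

/-- toggle the element `i`. -/
def tog (d : ℕ) (i : Fin d) (S : Finset (Fin d)) : Finset (Fin d) := symmDiff S {i}

lemma tog_invol (d : ℕ) (i : Fin d) : Function.Involutive (tog d i) := by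
  intro S; ext x; simp [tog, Finset.mem_symmDiff]

lemma symmDiff_tog (d : ℕ) (i : Fin d) (S T : Finset (Fin d)) :
    symmDiff (tog d i S) (tog d i T) = symmDiff S T := by
  ext x; simp [tog, Finset.mem_symmDiff]; tauto

lemma adj_tog (d : ℕ) (i : Fin d) (S T : Finset (Fin d)) :
    (cube d).Adj (tog d i S) (tog d i T) ↔ (cube d).Adj S T := by
  show (symmDiff (tog d i S) (tog d i T)).card = 1 ↔ _
  rw [symmDiff_tog]; rfl

lemma tog_of_not_mem (d : ℕ) (i : Fin d) (S : Finset (Fin d)) (h : i ∉ S) :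
    tog d i S = insert i S := by
  ext x; simp [tog, Finset.mem_symmDiff]; by_cases hx : x = i <;> simp_all

lemma tog_of_mem (d : ℕ) (i : Fin d) (S : Finset (Fin d)) (h : i ∈ S) :
    tog d i S = S.erase i := by
  ext x; simp [tog, Finset.mem_symmDiff, Finset.mem_erase]; by_cases hx : x = i <;> simp_all

lemma rearrange (a a' b b' : ℝ) :
    a * b + a' * b' ≤ max a a' * max b b' + min a a' * min b b' := by
  rcases le_total a a' with h | h <;> rcases le_total b b' with h' | h' <;>
    simp [max_eq_left, max_eq_right, min_eq_left, min_eq_right, h, h'] <;> nlinarith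

lemma vert_eq (d : ℕ) (i : Fin d) (S T : Finset (Fin d))
    (h : (cube d).Adj S T) (hi : i ∈ S) (hj : i ∉ T) : T = S.erase i := by
  have hmem : i ∈ symmDiff S T := by simp [Finset.mem_symmDiff, hi, hj]
  have h1 : (symmDiff S T).card = 1 := h
  obtain ⟨a, ha⟩ := Finset.card_eq_one.mp h1
  rw [ha, Finset.mem_singleton] at hmem
  subst hmem
  have hT : T = symmDiff S (symmDiff S T) := by
    ext x; simp [Finset.mem_symmDiff]
  rw [hT, ha, ← tog_of_mem d i S hi]; rfl

lemma vert_eq' (d : ℕ) (i : Fin d) (S T : Finset (Fin d))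
    (h : (cube d).Adj S T) (hi : i ∉ S) (hj : i ∈ T) : T = insert i S := by
  have := vert_eq d i T S (h.symm) hj hi
  rw [this, Finset.insert_erase hj]

/-- the edge-weight function -/
noncomputable def ew (d : ℕ) (u : Finset (Fin d) → ℝ) (S T : Finset (Fin d)) : ℝ :=
  if (cube d).Adj S T then u S * u T else 0

lemma quad_eq (d : ℕ) (u : Finset (Fin d) → ℝ) :
    u ⬝ᵥ ((cube d).adjMatrix ℝ *ᵥ u) = ∑ S, ∑ T, ew d u S T := by
  simp only [dotProduct, adjMatrix_mulVec_apply, Finset.mul_sum]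
  congr 1; ext S
  rw [neighborFinset_eq_filter, Finset.sum_filter]; rfl

lemma pointwise (d : ℕ) (i : Fin d) (v : Finset (Fin d) → ℝ) (S T : Finset (Fin d)) :
    ew d v S T + ew d v (tog d i S) (tog d i T) ≤
      ew d (compDown d i v) S T + ew d (compDown d i v) (tog d i S) (tog d i T) := by
  by_cases h : (cube d).Adj S T
  · have h' : (cube d).Adj (tog d i S) (tog d i T) := (adj_tog d i S T).mpr h
    simp only [ew, if_pos h, if_pos h']
    by_cases hi : i ∈ S <;> by_cases hj : i ∈ T
    · -- both contain i
      rw [tog_of_mem d i S hi, tog_of_mem d i T hj]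
      have hiS : i ∉ S.erase i := Finset.notMem_erase i S
      have hiT : i ∉ T.erase i := Finset.notMem_erase i T
      simp only [compDown, if_pos hi, if_pos hj, if_neg hiS, if_neg hiT,
        Finset.insert_erase hi, Finset.insert_erase hj]
      have := rearrange (v (S.erase i)) (v S) (v (T.erase i)) (v T)
      linarith
    · -- vertical edge, i ∈ S, i ∉ T : T = S.erase i
      have hT : T = S.erase i := vert_eq d i S T h hi hj
      subst hT
      rw [tog_of_mem d i S hi, tog_of_not_mem d i _ (Finset.notMem_erase i S)]
      simp only [compDown, if_pos hi, if_neg (Finset.notMem_erase i S),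
        Finset.insert_erase hi]
      have h1 : min (v (S.erase i)) (v S) * max (v (S.erase i)) (v S)
          = v (S.erase i) * v S := min_mul_max _ _
      nlinarith [h1]
    · -- vertical edge, i ∉ S, i ∈ T : T = insert i S
      have hT : T = insert i S := vert_eq' d i S T h hi hj
      subst hT
      rw [tog_of_not_mem d i S hi, tog_of_mem d i _ (Finset.mem_insert_self i S)]
      simp only [compDown, if_neg hi, if_pos (Finset.mem_insert_self i S),
        Finset.erase_insert hi]
      have h1 : min (v S) (v (insert i S)) * max (v S) (v (insert i S))
          = v S * v (insert i S) := min_mul_max _ _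
      nlinarith [h1]
    · -- neither contains i
      rw [tog_of_not_mem d i S hi, tog_of_not_mem d i T hj]
      have hiS : i ∈ insert i S := Finset.mem_insert_self i S
      have hiT : i ∈ insert i T := Finset.mem_insert_self i T
      simp only [compDown, if_neg hi, if_neg hj, if_pos hiS, if_pos hiT,
        Finset.erase_insert hi, Finset.erase_insert hj]
      have := rearrange (v S) (v (insert i S)) (v T) (v (insert i T))
      linarith
  · have h' : ¬ (cube d).Adj (tog d i S) (tog d i T) := fun hc => h ((adj_tog d i S T).mp hc)
    simp [ew, h, h']

theorem down_compression_quadForm (d : ℕ) (i : Fin d) (v : Finset (Fin d) → ℝ) :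
    v ⬝ᵥ ((cube d).adjMatrix ℝ *ᵥ v) ≤
      compDown d i v ⬝ᵥ ((cube d).adjMatrix ℝ *ᵥ compDown d i v) := by
  rw [quad_eq, quad_eq]
  have hbij : Function.Bijective (tog d i) := (tog_invol d i).bijective
  have reidx : ∀ u : Finset (Fin d) → ℝ,
      ∑ S, ∑ T, ew d u (tog d i S) (tog d i T) = ∑ S, ∑ T, ew d u S T := by
    intro u
    have inner : ∀ S, ∑ T, ew d u S (tog d i T) = ∑ T, ew d u S T := fun S =>
      Fintype.sum_bijective (tog d i) hbij _ _ (fun T => rfl)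
    calc ∑ S, ∑ T, ew d u (tog d i S) (tog d i T)
        = ∑ S, ∑ T, ew d u (tog d i S) T := by
          exact Finset.sum_congr rfl (fun S _ => inner (tog d i S))
      _ = ∑ S, ∑ T, ew d u S T :=
          Fintype.sum_bijective (tog d i) hbij _ _ (fun S => rfl)
  have key : ∑ S, ∑ T, (ew d v S T + ew d v (tog d i S) (tog d i T)) ≤
      ∑ S, ∑ T, (ew d (compDown d i v) S T
        + ew d (compDown d i v) (tog d i S) (tog d i T)) :=
    Finset.sum_le_sum fun S _ => Finset.sum_le_sum fun T _ => pointwise d i v S T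
  simp only [Finset.sum_add_distrib] at key
  rw [reidx v, reidx (compDown d i v)] at key
  linarith
end

section
/- Let i ≠ j ∈ [d] and v ∈ ℝ^{V(Q_d)}. Define C_{i,j}(v) which, for each set S with i ∈ S and j ∉ S, replaces (v_S, v_{S△{i,j}}) by (min, max) respectively so that the larger value sits on the set containing j. Then ⟨A(Q_d) v, v⟩ ≤ ⟨A(Q_d) C_{i,j}(v), C_{i,j}(v)⟩. -/
open SimpleGraph Finset Matrix

/-- The compression `C_{i,j}`: for pairs `(S, S △ {i,j})` with `i ∈ S`, `j ∉ S`,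
the values are rearranged so that the larger value sits on the set containing `j` but not `i`. -/
noncomputable def compIJ (d : ℕ) (i j : Fin d) (v : Finset (Fin d) → ℝ) :
    Finset (Fin d) → ℝ := fun S =>
  if i ∈ S ∧ j ∉ S then min (v S) (v (insert j (S.erase i)))
  else if j ∈ S ∧ i ∉ S then max (v S) (v (insert i (S.erase j)))
  else v S

namespace CompAux
variable {d : ℕ}

def f (i j : Fin d) (S : Finset (Fin d)) : Finset (Fin d) :=
  S.map (Equiv.swap i j).toEmbedding

lemma mem_f {i j : Fin d} {a : Fin d} {S : Finset (Fin d)} :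
    a ∈ f i j S ↔ Equiv.swap i j a ∈ S := by
  rw [f, Finset.mem_map_equiv, Equiv.symm_swap]

lemma ff (i j : Fin d) (S : Finset (Fin d)) : f i j (f i j S) = S := by
  ext a; simp [mem_f, Equiv.swap_apply_self]

lemma mem_f_i {i j : Fin d} {S : Finset (Fin d)} : i ∈ f i j S ↔ j ∈ S := by
  simp [mem_f, Equiv.swap_apply_left]

lemma mem_f_j {i j : Fin d} {S : Finset (Fin d)} : j ∈ f i j S ↔ i ∈ S := by
  simp [mem_f, Equiv.swap_apply_right]

lemma f_comm (i j : Fin d) (S : Finset (Fin d)) : f i j S = f j i S := by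
  rw [f, f, Equiv.swap_comm]

lemma f_eq_of_i {i j : Fin d} (hij : i ≠ j) {S : Finset (Fin d)}
    (hiS : i ∈ S) (hjS : j ∉ S) : f i j S = insert j (S.erase i) := by
  ext a
  simp only [mem_f, Finset.mem_insert, Finset.mem_erase]
  rcases eq_or_ne a i with rfl | hai
  · simp [Equiv.swap_apply_left, hjS, hij]
  · rcases eq_or_ne a j with rfl | haj
    · simp [Equiv.swap_apply_right, hiS]
    · rw [Equiv.swap_apply_of_ne_of_ne hai haj]; simp [hai, haj]

lemma f_fixed {i j : Fin d} {S : Finset (Fin d)} (h : (i ∈ S ↔ j ∈ S)) :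
    f i j S = S := by
  ext a
  rcases eq_or_ne a i with rfl | hai
  · simp [mem_f, Equiv.swap_apply_left, h]
  · rcases eq_or_ne a j with rfl | haj
    · simp [mem_f, Equiv.swap_apply_right, h]
    · rw [mem_f, Equiv.swap_apply_of_ne_of_ne hai haj]

lemma adj_f {i j : Fin d} {S T : Finset (Fin d)} :
    (cube d).Adj (f i j S) (f i j T) ↔ (cube d).Adj S T := by
  have h : symmDiff (f i j S) (f i j T) = (symmDiff S T).map (Equiv.swap i j).toEmbedding := by
    ext a; simp [mem_f, Finset.mem_symmDiff, Finset.mem_map_equiv, Equiv.symm_swap]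
  show (symmDiff (f i j S) (f i j T)).card = 1 ↔ (symmDiff S T).card = 1
  rw [h, Finset.card_map]

variable (i j : Fin d) (v : Finset (Fin d) → ℝ)

lemma w_i {S : Finset (Fin d)} (hij : i ≠ j) (hiS : i ∈ S) (hjS : j ∉ S) :
    compIJ d i j v S = min (v S) (v (f i j S)) := by
  rw [compIJ, if_pos ⟨hiS, hjS⟩, f_eq_of_i hij hiS hjS]

lemma w_j {S : Finset (Fin d)} (hij : i ≠ j) (hjS : j ∈ S) (hiS : i ∉ S) :
    compIJ d i j v S = max (v S) (v (f i j S)) := by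
  rw [compIJ]
  rw [if_neg (by tauto), if_pos ⟨hjS, hiS⟩, f_comm, f_eq_of_i hij.symm hjS hiS]

lemma w_fixed {S : Finset (Fin d)} (h : (i ∈ S ↔ j ∈ S)) :
    compIJ d i j v S = v S := by
  rw [compIJ]; rw [if_neg (by tauto), if_neg (by tauto)]

lemma hsum (hij : i ≠ j) (S : Finset (Fin d)) :
    compIJ d i j v S + compIJ d i j v (f i j S) = v S + v (f i j S) := by
  by_cases hiS : i ∈ S <;> by_cases hjS : j ∈ S
  · rw [f_fixed (by tauto), w_fixed i j v (by tauto)]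
  · rw [w_i i j v hij hiS hjS,
      w_j i j v hij (mem_f_j.mpr hiS) (fun h => hjS (mem_f_i.mp h)), ff,
      max_comm]
    exact min_add_max _ _
  · rw [w_j i j v hij hjS hiS,
      w_i i j v hij (mem_f_i.mpr hjS) (fun h => hiS (mem_f_j.mp h)), ff,
      min_comm]
    rw [add_comm]
    exact min_add_max _ _
  · rw [f_fixed (by tauto), w_fixed i j v (by tauto)]

lemma rearr (a a' b b' : ℝ) :
    a * b + a' * b' ≤ min a a' * min b b' + max a a' * max b b' := by
  rcases le_total a a' with h | h <;> rcases le_total b b' with h' | h' <;>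
    simp [min_eq_left, min_eq_right, max_eq_left, max_eq_right, h, h'] <;> nlinarith

lemma key (hij : i ≠ j) {S T : Finset (Fin d)} (hadj : (cube d).Adj S T) :
    v S * v T + v (f i j S) * v (f i j T) ≤
      compIJ d i j v S * compIJ d i j v T +
        compIJ d i j v (f i j S) * compIJ d i j v (f i j T) := by
  have hcard : (symmDiff S T).card = 1 := hadj
  by_cases hS : i ∈ S ↔ j ∈ S
  · rw [f_fixed hS, w_fixed i j v hS]
    exact le_of_eq (by linear_combination v S * (hsum i j v hij T).symm)
  · by_cases hT : i ∈ T ↔ j ∈ T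
    · rw [f_fixed hT, w_fixed i j v hT]
      exact le_of_eq (by linear_combination v T * (hsum i j v hij S).symm)
    · -- both non-fixed
      by_cases hiS : i ∈ S <;> by_cases hiT : i ∈ T
      · -- both i-type
        have hjS : j ∉ S := fun h => hS ⟨fun _ => h, fun _ => hiS⟩
        have hjT : j ∉ T := fun h => hT ⟨fun _ => h, fun _ => hiT⟩
        rw [w_i i j v hij hiS hjS, w_i i j v hij hiT hjT,
          w_j i j v hij (mem_f_j.mpr hiS) (fun h => hjS (mem_f_i.mp h)),
          w_j i j v hij (mem_f_j.mpr hiT) (fun h => hjT (mem_f_i.mp h)), ff, ff,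
          max_comm (v (f i j S)) (v S), max_comm (v (f i j T)) (v T)]
        exact rearr _ _ _ _
      · -- S i-type, T j-type: contradiction
        have hjS : j ∉ S := fun h => hS ⟨fun _ => h, fun _ => hiS⟩
        have hjT : j ∈ T := by tauto
        have hi : i ∈ symmDiff S T := Finset.mem_symmDiff.mpr (Or.inl ⟨hiS, hiT⟩)
        have hj : j ∈ symmDiff S T := Finset.mem_symmDiff.mpr (Or.inr ⟨hjT, hjS⟩)
        have : 1 < (symmDiff S T).card := Finset.one_lt_card.mpr ⟨i, hi, j, hj, hij⟩
        omega
      · -- S j-type, T i-type: contradiction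
        have hjS : j ∈ S := by tauto
        have hjT : j ∉ T := fun h => hT ⟨fun _ => h, fun _ => hiT⟩
        have hi : i ∈ symmDiff S T := Finset.mem_symmDiff.mpr (Or.inr ⟨hiT, hiS⟩)
        have hj : j ∈ symmDiff S T := Finset.mem_symmDiff.mpr (Or.inl ⟨hjS, hjT⟩)
        have : 1 < (symmDiff S T).card := Finset.one_lt_card.mpr ⟨i, hi, j, hj, hij⟩
        omega
      · -- both j-type
        have hjS : j ∈ S := by tauto
        have hjT : j ∈ T := by tauto
        rw [w_j i j v hij hjS hiS, w_j i j v hij hjT hiT,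
          w_i i j v hij (mem_f_i.mpr hjS) (fun h => hiS (mem_f_j.mp h)),
          w_i i j v hij (mem_f_i.mpr hjT) (fun h => hiT (mem_f_j.mp h)), ff, ff,
          min_comm (v (f i j S)) (v S), min_comm (v (f i j T)) (v T)]
        linarith [rearr (v S) (v (f i j S)) (v T) (v (f i j T))]

end CompAux

theorem ij_compression_quadForm (d : ℕ) (i j : Fin d) (hij : i ≠ j)
    (v : Finset (Fin d) → ℝ) :
    v ⬝ᵥ ((cube d).adjMatrix ℝ *ᵥ v) ≤
      compIJ d i j v ⬝ᵥ ((cube d).adjMatrix ℝ *ᵥ compIJ d i j v) := by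
  classical
  open CompAux in
  set A : Matrix (Finset (Fin d)) (Finset (Fin d)) ℝ := (cube d).adjMatrix ℝ with hA
  set w := compIJ d i j v with hw
  let e : Equiv.Perm (Finset (Fin d)) := ⟨f i j, f i j, ff i j, ff i j⟩
  have hq : ∀ u : Finset (Fin d) → ℝ,
      u ⬝ᵥ (A *ᵥ u) = ∑ S, ∑ T, A S T * (u S * u T) := by
    intro u
    simp only [dotProduct, mulVec, Finset.mul_sum]
    exact Finset.sum_congr rfl fun S _ => Finset.sum_congr rfl fun T _ => by ring
  have hAf : ∀ S T, A (f i j S) (f i j T) = A S T := by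
    intro S T
    by_cases h : (cube d).Adj S T
    · rw [hA, SimpleGraph.adjMatrix_apply, SimpleGraph.adjMatrix_apply,
        if_pos (adj_f.mpr h), if_pos h]
    · rw [hA, SimpleGraph.adjMatrix_apply, SimpleGraph.adjMatrix_apply,
        if_neg (fun hc => h (adj_f.mp hc)), if_neg h]
  have hre : ∀ u : Finset (Fin d) → ℝ,
      (∑ S, ∑ T, A S T * (u S * u T)) = ∑ S, ∑ T, A S T * (u (f i j S) * u (f i j T)) := by
    intro u
    rw [← Equiv.sum_comp e (fun S => ∑ T, A S T * (u S * u T))]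
    refine Finset.sum_congr rfl fun S _ => ?_
    rw [← Equiv.sum_comp e (fun T => A (e S) T * (u (e S) * u T))]
    refine Finset.sum_congr rfl fun T _ => ?_
    show A (f i j S) (f i j T) * (u (f i j S) * u (f i j T)) = _
    rw [hAf]
  have hdouble : ∀ u : Finset (Fin d) → ℝ,
      u ⬝ᵥ (A *ᵥ u) + u ⬝ᵥ (A *ᵥ u)
        = ∑ S, ∑ T, A S T * (u S * u T + u (f i j S) * u (f i j T)) := by
    intro u
    rw [hq u]
    nth_rewrite 2 [hre u]
    rw [← Finset.sum_add_distrib]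
    refine Finset.sum_congr rfl fun S _ => ?_
    rw [← Finset.sum_add_distrib]
    exact Finset.sum_congr rfl fun T _ => by ring
  have hle : (∑ S, ∑ T, A S T * (v S * v T + v (f i j S) * v (f i j T)))
      ≤ ∑ S, ∑ T, A S T * (w S * w T + w (f i j S) * w (f i j T)) := by
    refine Finset.sum_le_sum fun S _ => Finset.sum_le_sum fun T _ => ?_
    by_cases h : (cube d).Adj S T
    · exact mul_le_mul_of_nonneg_left (key i j v hij h)
        (by rw [hA, SimpleGraph.adjMatrix_apply]; positivity)
    · rw [hA, SimpleGraph.adjMatrix_apply, if_neg h]; simp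
  have h1 := hdouble v
  have h2 := hdouble w
  linarith
end

section
/- Let U be a subset of V(Q_d) of size n and d' ≤ d. Then the number of d'-dimensional subcubes contained in Q_d[U] is at most (n/2^{d'})·C(⌈log₂ n⌉ + 1, d'). -/
open SimpleGraph Finset Matrix

/-- The number of `d'`-dimensional subcubes of `Q_d` all of whose vertices lie in `U`;
a subcube is encoded by its bottom vertex `p.1` and its set of free directions `p.2`. -/
def numCubes (d d' : ℕ) (U : Finset (Finset (Fin d))) : ℕ :=
  (Finset.univ.filter (fun p : Finset (Fin d) × Finset (Fin d) =>
    Disjoint p.1 p.2 ∧ p.2.card = d' ∧ ∀ T ∈ p.2.powerset, p.1 ∪ T ∈ U)).card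



open Finset

/-- binary digit sum -/
def sz (n : ℕ) : ℕ :=
  if h : n = 0 then 0 else n % 2 + sz (n / 2)
decreasing_by exact Nat.div_lt_self (Nat.pos_of_ne_zero h) one_lt_two

lemma sz_zero : sz 0 = 0 := by rw [sz]; simp

lemma sz_two_mul (m : ℕ) : sz (2 * m) = sz m := by
  rcases Nat.eq_zero_or_pos m with h | h
  · simp [h]
  · rw [sz]
    have : 2 * m ≠ 0 := by omega
    simp [this, Nat.mul_mod_right, Nat.mul_div_cancel_left _ (by norm_num : 0 < 2)]

lemma sz_two_mul_add_one (m : ℕ) : sz (2 * m + 1) = sz m + 1 := by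
  rw [sz]
  have h1 : (2 * m + 1) % 2 = 1 := by omega
  have h2 : (2 * m + 1) / 2 = m := by omega
  rw [dif_neg (by omega : ¬ (2 * m + 1 = 0)), h1, h2]
  omega

lemma sz_le (n : ℕ) : sz n ≤ n := by
  induction n using Nat.strong_induction_on with
  | _ n ih =>
    rcases Nat.eq_zero_or_pos n with h | h
    · simp [h, sz_zero]
    · rw [sz]
      have hne : n ≠ 0 := by omega
      simp only [hne, dif_neg, not_false_iff]
      have := ih (n / 2) (Nat.div_lt_self h one_lt_two)
      omega

lemma sz_pow_add (t : ℕ) : ∀ i < 2 ^ t, sz (2 ^ t + i) = sz i + 1 := by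
  induction t with
  | zero =>
    intro i hi
    interval_cases i
    simpa using sz_two_mul_add_one 0
  | succ t ih =>
    intro i hi
    rcases Nat.even_or_odd i with ⟨j, hj⟩ | ⟨j, hj⟩
    · have h1 : 2 ^ (t+1) + i = 2 * (2 ^ t + j) := by rw [hj]; ring
      have h2 : i = 2 * j := by omega
      rw [h1, sz_two_mul, ih j (by omega), h2, sz_two_mul]
    · have h1 : 2 ^ (t+1) + i = 2 * (2 ^ t + j) + 1 := by rw [hj]; ring
      rw [h1, sz_two_mul_add_one, ih j (by omega), hj, sz_two_mul_add_one]

/-- number of `j < n` with binary digit sum `< s` -/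
def Fc (s n : ℕ) : ℕ := ((range n).filter (fun j => sz j < s)).card

lemma Fc_zero_left (n : ℕ) : Fc 0 n = 0 := by
  simp [Fc]

lemma Fc_succ (s n : ℕ) : Fc s (n + 1) = Fc s n + if sz n < s then 1 else 0 := by
  unfold Fc
  rw [range_add_one, filter_insert]
  split_ifs with h
  · rw [card_insert_of_notMem (by simp)]
  · rfl

lemma Fc_double (s m : ℕ) : Fc s (2 * m) = Fc s m + Fc (s - 1) m := by
  induction m with
  | zero => simp [Fc]
  | succ m ih =>
    have h2 : 2 * (m + 1) = 2 * m + 1 + 1 := by ring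
    rw [h2, Fc_succ, Fc_succ, ih, sz_two_mul, sz_two_mul_add_one, Fc_succ, Fc_succ]
    have : (if sz m + 1 < s then 1 else 0) = (if sz m < s - 1 then 1 else 0) := by
      split_ifs <;> omega
    rw [this]
    ring

/-- key superadditivity of the counting function -/
lemma Fc_super : ∀ N s a b : ℕ, a + b ≤ N → b ≤ a → Fc s (a + b) ≤ Fc s a + Fc (s - 1) b := by
  intro N
  induction N with
  | zero =>
    intro s a b hab hba
    have ha : a = 0 := by omega
    have hb : b = 0 := by omega
    simp [ha, hb]
  | succ N ih =>
    intro s a b hab hba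
    rcases Nat.eq_zero_or_pos b with hb0 | hb0
    · simp [hb0]
    rcases eq_or_lt_of_le hba with heq | hlt
    · -- b = a
      subst heq
      have : b + b = 2 * b := by ring
      rw [this, Fc_double]
    -- b < a
    rcases Nat.even_or_odd a with ⟨α, hα⟩ | ⟨α, hα⟩ <;>
      rcases Nat.even_or_odd b with ⟨β, hβ⟩ | ⟨β, hβ⟩
    · -- a = 2α, b = 2β
      have h1 : a + b = 2 * (α + β) := by omega
      rw [h1, Fc_double]
      have i1 : Fc s (α + β) ≤ Fc s α + Fc (s - 1) β := ih s α β (by omega) (by omega)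
      have i2 : Fc (s - 1) (α + β) ≤ Fc (s - 1) α + Fc (s - 1 - 1) β :=
        ih (s - 1) α β (by omega) (by omega)
      have d1 : Fc s a = Fc s α + Fc (s - 1) α := by
        have ha2 : a = 2 * α := by omega
        rw [ha2, Fc_double]
      have d2 : Fc (s - 1) b = Fc (s - 1) β + Fc (s - 1 - 1) β := by
        have hb2 : b = 2 * β := by omega
        rw [hb2, Fc_double]
      omega
    · -- a = 2α, b = 2β + 1, b < a so β + 1 ≤ α
      have hβα : β + 1 ≤ α := by omega
      have h1 : a + b = 2 * (α + β) + 1 := by omega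
      rw [h1, Fc_succ, sz_two_mul, Fc_double]
      have e1 : Fc s (α + β) + (if sz (α + β) < s then 1 else 0) = Fc s (α + β + 1) :=
        (Fc_succ s (α + β)).symm
      have i1 : Fc s (α + β + 1) ≤ Fc s α + Fc (s - 1) (β + 1) := by
        have : α + β + 1 = α + (β + 1) := by ring
        rw [this]; exact ih s α (β + 1) (by omega) (by omega)
      have i2 : Fc (s - 1) (α + β) ≤ Fc (s - 1) α + Fc (s - 1 - 1) β :=
        ih (s - 1) α β (by omega) (by omega)
      have d1 : Fc s a = Fc s α + Fc (s - 1) α := by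
        have ha2 : a = 2 * α := by omega
        rw [ha2, Fc_double]
      have d2 : Fc (s - 1) b = Fc (s - 1) β + Fc (s - 1 - 1) β
          + (if sz β < s - 1 then 1 else 0) := by
        have hb : b = 2 * β + 1 := by omega
        rw [hb, Fc_succ, Fc_double, sz_two_mul]
      have e2 : Fc (s - 1) (β + 1) = Fc (s - 1) β + (if sz β < s - 1 then 1 else 0) :=
        Fc_succ (s - 1) β
      omega
    · -- a = 2α + 1, b = 2β
      have h1 : a + b = 2 * (α + β) + 1 := by omega
      rw [h1, Fc_succ, sz_two_mul, Fc_double]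
      have e1 : Fc s (α + β) + (if sz (α + β) < s then 1 else 0) = Fc s (α + β + 1) :=
        (Fc_succ s (α + β)).symm
      have i1 : Fc s (α + β + 1) ≤ Fc s (α + 1) + Fc (s - 1) β := by
        have : α + β + 1 = (α + 1) + β := by ring
        rw [this]; exact ih s (α + 1) β (by omega) (by omega)
      have i2 : Fc (s - 1) (α + β) ≤ Fc (s - 1) α + Fc (s - 1 - 1) β :=
        ih (s - 1) α β (by omega) (by omega)
      have e2 : Fc s (α + 1) = Fc s α + (if sz α < s then 1 else 0) := Fc_succ s α
      have d1 : Fc s a = Fc s α + Fc (s - 1) α + (if sz α < s then 1 else 0) := by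
        have ha' : a = 2 * α + 1 := by omega
        rw [ha', Fc_succ, Fc_double, sz_two_mul]
      have d2 : Fc (s - 1) b = Fc (s - 1) β + Fc (s - 1 - 1) β := by
        have hb2 : b = 2 * β := by omega
        rw [hb2, Fc_double]
      omega
    · -- a = 2α + 1, b = 2β + 1, b < a so β < α
      have hβα : β + 1 ≤ α := by omega
      have h1 : a + b = 2 * (α + β + 1) := by omega
      rw [h1, Fc_double]
      have i1 : Fc s (α + β + 1) ≤ Fc s (α + 1) + Fc (s - 1) β := by
        have : α + β + 1 = (α + 1) + β := by ring
        rw [this]; exact ih s (α + 1) β (by omega) (by omega)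
      have i2 : Fc (s - 1) (α + β + 1) ≤ Fc (s - 1) α + Fc (s - 1 - 1) (β + 1) := by
        have : α + β + 1 = α + (β + 1) := by ring
        rw [this]; exact ih (s - 1) α (β + 1) (by omega) (by omega)
      have e1 : Fc s (α + 1) = Fc s α + (if sz α < s then 1 else 0) := Fc_succ s α
      have e2 : Fc (s - 1 - 1) (β + 1) = Fc (s - 1 - 1) β
          + (if sz β < s - 1 - 1 then 1 else 0) := Fc_succ (s - 1 - 1) β
      have d1 : Fc s a = Fc s α + Fc (s - 1) α + (if sz α < s then 1 else 0) := by
        have ha' : a = 2 * α + 1 := by omega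
        rw [ha', Fc_succ, Fc_double, sz_two_mul]
      have d2 : Fc (s - 1) b = Fc (s - 1) β + Fc (s - 1 - 1) β
          + (if sz β < s - 1 then 1 else 0) := by
        have hb' : b = 2 * β + 1 := by omega
        rw [hb', Fc_succ, Fc_double, sz_two_mul]
      have mono : (if sz β < s - 1 - 1 then 1 else 0) ≤ (if sz β < s - 1 then (1:ℕ) else 0) := by
        split_ifs <;> omega
      omega

/-- `gc n k = Σ_{j<n} C(sz j, k)` -/
def gc (n k : ℕ) : ℕ := ∑ j ∈ range n, (sz j).choose k

lemma gc_zero_right (n : ℕ) : gc n 0 = n := by simp [gc]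

lemma gc_mono {n m : ℕ} (k : ℕ) (h : n ≤ m) : gc n k ≤ gc m k :=
  Finset.sum_le_sum_of_subset (range_subset_range.mpr h)

lemma gc_succ (n k : ℕ) : gc (n + 1) k = gc n k + (sz n).choose k := by
  simp [gc, Finset.sum_range_succ]

lemma gc_double (m k : ℕ) : gc (2 * m) (k + 1) = 2 * gc m (k + 1) + gc m k := by
  induction m with
  | zero => simp [gc]
  | succ m ih =>
    have h2 : 2 * (m + 1) = 2 * m + 1 + 1 := by ring
    rw [h2, gc_succ, gc_succ, ih, sz_two_mul, sz_two_mul_add_one, gc_succ, gc_succ,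
      Nat.choose_succ_succ' (sz m) k]
    ring

lemma gc_pair (b k : ℕ) :
    gc b (k + 1) + gc b k = ∑ i ∈ range b, (sz i + 1).choose (k + 1) := by
  unfold gc
  rw [← Finset.sum_add_distrib]
  exact Finset.sum_congr rfl (fun i _ => by rw [Nat.choose_succ_succ' (sz i) k]; omega)

lemma hockey (x k : ℕ) : ∑ y ∈ range x, y.choose k = x.choose (k + 1) := by
  induction x with
  | zero => simp
  | succ x ih => rw [Finset.sum_range_succ, ih, Nat.choose_succ_succ' x k]; omega

lemma choose_as_sum {Y x : ℕ} (k : ℕ) (h : x ≤ Y) :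
    x.choose (k + 1) = ∑ y ∈ range Y, if y < x then y.choose k else 0 := by
  rw [← hockey x k]
  have h1 : ∑ y ∈ range x, y.choose k = ∑ y ∈ range x, if y < x then y.choose k else 0 :=
    Finset.sum_congr rfl (fun y hy => (if_pos (mem_range.mp hy)).symm)
  rw [h1]
  exact Finset.sum_subset (range_subset_range.mpr h)
    (fun y _ hy => if_neg (fun hc => hy (mem_range.mpr hc)))

lemma expand_sum (Y k : ℕ) (s : Finset ℕ) (f : ℕ → ℕ) (hf : ∀ i ∈ s, f i ≤ Y) :
    ∑ i ∈ s, (f i).choose (k + 1) =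
      ∑ y ∈ range Y, (s.filter (fun i => y < f i)).card * y.choose k :=
  calc ∑ i ∈ s, (f i).choose (k + 1)
      = ∑ i ∈ s, ∑ y ∈ range Y, if y < f i then y.choose k else 0 :=
        Finset.sum_congr rfl (fun i hi => choose_as_sum k (hf i hi))
    _ = ∑ y ∈ range Y, ∑ i ∈ s, if y < f i then y.choose k else 0 := Finset.sum_comm
    _ = ∑ y ∈ range Y, (s.filter (fun i => y < f i)).card * y.choose k := by
        refine Finset.sum_congr rfl (fun y _ => ?_)
        rw [← Finset.sum_filter, Finset.sum_const, smul_eq_mul]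

lemma window_count (a b y : ℕ) (hba : b ≤ a) :
    ((range b).filter (fun i => y < sz i + 1)).card ≤
      ((Ico a (a + b)).filter (fun j => y < sz j)).card := by
  have hL : ((range b).filter (fun i => y < sz i + 1)).card + Fc y b = b := by
    have h := Finset.card_filter_add_card_filter_not
      (s := range b) (p := fun i => sz i < y)
    have hcongr : (range b).filter (fun i => ¬ (sz i < y)) =
        (range b).filter (fun i => y < sz i + 1) := by
      apply Finset.filter_congr; intro i _
      constructor <;> intro <;> omega
    rw [hcongr] at h
    unfold Fc
    simp only [Finset.card_range] at h
    omega
  have hsplit : Fc (y + 1) (a + b) =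
      Fc (y + 1) a + ((Ico a (a + b)).filter (fun j => sz j < y + 1)).card := by
    unfold Fc
    simp only [range_eq_Ico]
    rw [← Finset.Ico_union_Ico_eq_Ico (Nat.zero_le a)
      (Nat.le_add_right a b), Finset.filter_union]
    exact Finset.card_union_of_disjoint (Finset.disjoint_filter_filter
      (Finset.Ico_disjoint_Ico_consecutive 0 a (a + b)))
  have hsuper := Fc_super (a + b) (y + 1) a b le_rfl hba
  simp only [Nat.add_sub_cancel] at hsuper
  have hR : ((Ico a (a + b)).filter (fun j => sz j < y + 1)).card +
      ((Ico a (a + b)).filter (fun j => y < sz j)).card = b := by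
    have h := Finset.card_filter_add_card_filter_not
      (s := Ico a (a + b)) (p := fun j => sz j < y + 1)
    have hcongr : (Ico a (a + b)).filter (fun j => ¬ (sz j < y + 1)) =
        (Ico a (a + b)).filter (fun j => y < sz j) := by
      apply Finset.filter_congr; intro i _
      constructor <;> intro <;> omega
    rw [hcongr] at h
    rw [h, Nat.card_Ico]
    omega
  omega

lemma gc_superadd (k a b : ℕ) (hba : b ≤ a) :
    gc a (k + 1) + gc b (k + 1) + gc b k ≤ gc (a + b) (k + 1) := by
  have hsplit : gc (a + b) (k + 1) =
      gc a (k + 1) + ∑ j ∈ Ico a (a + b), (sz j).choose (k + 1) := by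
    unfold gc
    simp only [range_eq_Ico]
    rw [← Finset.sum_Ico_consecutive _ (Nat.zero_le a) (Nat.le_add_right a b)]
  rw [hsplit, add_assoc, gc_pair b k]
  refine Nat.add_le_add_left ?_ _
  set Y := a + b + 1 with hY
  have hLe : ∑ i ∈ range b, (sz i + 1).choose (k + 1) =
      ∑ y ∈ range Y, ((range b).filter (fun i => y < sz i + 1)).card * y.choose k := by
    have := expand_sum Y k (range b) (fun i => sz i + 1)
      (fun i hi => show sz i + 1 ≤ Y by
        have h1 := sz_le i; have h2 := mem_range.mp hi; omega)
    simpa using this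
  have hRe : ∑ j ∈ Ico a (a + b), (sz j).choose (k + 1) =
      ∑ y ∈ range Y, ((Ico a (a + b)).filter (fun j => y < sz j)).card * y.choose k := by
    have := expand_sum Y k (Ico a (a + b)) sz
      (fun j hj => show sz j ≤ Y by
        have h1 := sz_le j; have h2 := (mem_Ico.mp hj).2; omega)
    simpa using this
  rw [hLe, hRe]
  exact Finset.sum_le_sum (fun y _ =>
    Nat.mul_le_mul_right _ (window_count a b y hba))

lemma gc_pow (t : ℕ) : ∀ k, 2 ^ k * gc (2 ^ t) k = 2 ^ t * Nat.choose t k := by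
  induction t with
  | zero =>
    intro k
    cases k with
    | zero => simp [gc, sz_zero]
    | succ k => simp [gc, sz_zero, Nat.choose_eq_zero_of_lt (Nat.succ_pos k)]
  | succ t ih =>
    intro k
    cases k with
    | zero => simp [gc_zero_right]
    | succ k =>
      have h2 : (2:ℕ) ^ (t + 1) = 2 * 2 ^ t := by ring
      rw [h2, gc_double]
      calc 2 ^ (k + 1) * (2 * gc (2 ^ t) (k + 1) + gc (2 ^ t) k)
          = 2 * (2 ^ (k + 1) * gc (2 ^ t) (k + 1)) + 2 * (2 ^ k * gc (2 ^ t) k) := by ring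
        _ = 2 * (2 ^ t * Nat.choose t (k + 1)) + 2 * (2 ^ t * Nat.choose t k) := by
            rw [ih (k + 1), ih k]
        _ = 2 * 2 ^ t * Nat.choose (t + 1) (k + 1) := by
            rw [Nat.choose_succ_succ' t k]; ring

lemma gc_window (t r : ℕ) (hr : r ≤ 2 ^ t) (k : ℕ) :
    gc (2 ^ t + r) k = gc (2 ^ t) k + ∑ i ∈ range r, (sz i + 1).choose k := by
  have h1 : gc (2 ^ t + r) k
      = gc (2 ^ t) k + ∑ j ∈ Ico (2 ^ t) (2 ^ t + r), (sz j).choose k := by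
    unfold gc
    simp only [range_eq_Ico]
    rw [← Finset.sum_Ico_consecutive _ (Nat.zero_le (2 ^ t)) (Nat.le_add_right (2 ^ t) r)]
  rw [h1]
  congr 1
  rw [Finset.sum_Ico_eq_sum_range]
  simp only [Nat.add_sub_cancel_left]
  exact Finset.sum_congr rfl (fun i hi =>
    by rw [sz_pow_add t i (lt_of_lt_of_le (mem_range.mp hi) hr)])

lemma gc_bound : ∀ t n k, n ≤ 2 ^ t → 2 ^ k * gc n k ≤ n * Nat.choose (t + 1) k := by
  intro t
  induction t with
  | zero =>
    intro n k hn
    interval_cases n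
    · simp [gc]
    · cases k with
      | zero => simp [gc_zero_right]
      | succ k =>
        have h1 : gc 1 (k + 1) = 0 := by
          simp [gc, sz_zero, Nat.choose_eq_zero_of_lt (Nat.succ_pos k)]
        simp [h1]
  | succ t ih =>
    intro n k hn
    by_cases hsmall : n ≤ 2 ^ t
    · exact (ih n k hsmall).trans (Nat.mul_le_mul_left n (Nat.choose_le_choose k (by omega)))
    · push_neg at hsmall
      have hpow : (2:ℕ) ^ (t + 1) = 2 ^ t + 2 ^ t := by ring
      set r := n - 2 ^ t with hrdef
      have hr2 : r ≤ 2 ^ t := by omega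
      have hnr : n = 2 ^ t + r := by omega
      cases k with
      | zero => simp [gc_zero_right]
      | succ k =>
        rw [hnr, gc_window t r hr2 (k + 1), ← gc_pair r k]
        have e1 : 2 ^ (k + 1) * (gc (2 ^ t) (k + 1) + (gc r (k + 1) + gc r k))
            = 2 ^ (k + 1) * gc (2 ^ t) (k + 1) + 2 ^ (k + 1) * gc r (k + 1)
              + 2 * (2 ^ k * gc r k) := by ring
        rw [e1, gc_pow t (k + 1)]
        have i1 : 2 ^ (k + 1) * gc r (k + 1) ≤ r * Nat.choose (t + 1) (k + 1) :=
          ih r (k + 1) hr2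
        have i2 : 2 ^ k * gc r k ≤ r * Nat.choose (t + 1) k := ih r k hr2
        have m1 : Nat.choose t (k + 1) ≤ Nat.choose (t + 1) (k + 1) :=
          Nat.choose_le_choose (k + 1) (Nat.le_succ t)
        have hps : Nat.choose (t + 2) (k + 1)
            = Nat.choose (t + 1) k + Nat.choose (t + 1) (k + 1) := by
          rw [Nat.choose_succ_succ' (t + 1) k]
        calc 2 ^ t * Nat.choose t (k + 1) + 2 ^ (k + 1) * gc r (k + 1) + 2 * (2 ^ k * gc r k)
            ≤ 2 ^ t * Nat.choose (t + 1) (k + 1) + r * Nat.choose (t + 1) (k + 1)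
              + 2 * (r * Nat.choose (t + 1) k) := by
              refine Nat.add_le_add (Nat.add_le_add ?_ i1) ?_
              · exact Nat.mul_le_mul_left _ m1
              · exact Nat.mul_le_mul_left _ i2
          _ ≤ (2 ^ t + r) * Nat.choose (t + 1 + 1) (k + 1) := by
              rw [hps]
              have h2r : 2 * (r * Nat.choose (t + 1) k)
                  ≤ (2 ^ t + r) * Nat.choose (t + 1) k := by
                have : 2 * r ≤ 2 ^ t + r := by omega
                calc 2 * (r * Nat.choose (t + 1) k) = (2 * r) * Nat.choose (t + 1) k := by ring
                  _ ≤ (2 ^ t + r) * Nat.choose (t + 1) k := Nat.mul_le_mul_right _ this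
              have expand : (2 ^ t + r) * (Nat.choose (t + 1) k + Nat.choose (t + 1) (k + 1))
                  = (2 ^ t + r) * Nat.choose (t + 1) (k + 1)
                    + (2 ^ t + r) * Nat.choose (t + 1) k := by ring
              rw [expand]
              have : 2 ^ t * Nat.choose (t + 1) (k + 1) + r * Nat.choose (t + 1) (k + 1)
                  = (2 ^ t + r) * Nat.choose (t + 1) (k + 1) := by ring
              omega

lemma numCubes_zero_le (d : ℕ) (U : Finset (Finset (Fin d))) : numCubes d 0 U ≤ U.card := by
  unfold numCubes
  apply Finset.card_le_card_of_injOn (fun p => p.1)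
  · intro p hp
    simp only [Finset.mem_coe, Finset.mem_filter, Finset.mem_univ, true_and] at hp
    obtain ⟨hdisj, hcard, hall⟩ := hp
    have h := hall ∅ (Finset.empty_mem_powerset _)
    simpa using h
  · intro p hp q hq hpq
    simp only [Finset.coe_filter, Set.mem_setOf_eq, Finset.mem_univ, true_and] at hp hq
    have hp2 : p.2 = ∅ := Finset.card_eq_zero.mp hp.2.1
    have hq2 : q.2 = ∅ := Finset.card_eq_zero.mp hq.2.1
    exact Prod.ext hpq (hp2.trans hq2.symm)

lemma numCubes_le_gc (d : ℕ) (A : Finset (Fin d)) :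
    ∀ U : Finset (Finset (Fin d)), (∀ S ∈ U, S ⊆ A) → ∀ k, numCubes d k U ≤ gc U.card k := by
  induction A using Finset.induction_on with
  | empty =>
    intro U hU k
    cases k with
    | zero => rw [gc_zero_right]; exact numCubes_zero_le d U
    | succ k =>
      have hzero : numCubes d (k + 1) U = 0 := by
        unfold numCubes
        rw [Finset.card_eq_zero, Finset.filter_eq_empty_iff]
        rintro p _ ⟨hdisj, hcard, hall⟩
        have h1 : p.1 ∪ p.2 ∈ U := hall p.2 (Finset.mem_powerset_self p.2)
        have h2 : p.1 ∪ p.2 ⊆ ∅ := hU _ h1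
        have h3 : p.2 = ∅ := Finset.subset_empty.mp
          ((Finset.subset_union_right).trans h2)
        rw [h3] at hcard
        simp at hcard
      rw [hzero]
      exact Nat.zero_le _
  | @insert a A ha ih =>
    intro U hU k
    cases k with
    | zero => rw [gc_zero_right]; exact numCubes_zero_le d U
    | succ k =>
      set U0 : Finset (Finset (Fin d)) := U.filter (fun S => a ∉ S) with hU0def
      set U1 : Finset (Finset (Fin d)) :=
        (U.filter (fun S => a ∈ S)).image (fun S => S.erase a) with hU1def
      set W : Finset (Finset (Fin d)) := U0 ∩ U1 with hWdef
      have hU0 : ∀ S ∈ U0, S ⊆ A := by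
        intro S hS
        rw [hU0def, Finset.mem_filter] at hS
        intro x hx
        have hx' := hU S hS.1 hx
        rw [Finset.mem_insert] at hx'
        rcases hx' with rfl | h
        · exact absurd hx hS.2
        · exact h
      have hU1 : ∀ S ∈ U1, S ⊆ A := by
        intro S hS
        rw [hU1def, Finset.mem_image] at hS
        obtain ⟨S', hS', rfl⟩ := hS
        rw [Finset.mem_filter] at hS'
        intro x hx
        rw [Finset.mem_erase] at hx
        have hx' := hU S' hS'.1 hx.2
        rw [Finset.mem_insert] at hx'
        rcases hx' with rfl | h
        · exact absurd rfl hx.1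
        · exact h
      have hW : ∀ S ∈ W, S ⊆ A := fun S hS => hU0 S (Finset.mem_inter.mp hS).1
      have hcard1 : U1.card = (U.filter (fun S => a ∈ S)).card := by
        rw [hU1def]
        apply Finset.card_image_of_injOn
        intro S hS T hT h
        rw [Finset.mem_coe, Finset.mem_filter] at hS hT
        have h' : S.erase a = T.erase a := h
        rw [← Finset.insert_erase hS.2, ← Finset.insert_erase hT.2, h']
      have hcardsum : U0.card + U1.card = U.card := by
        rw [hcard1, hU0def, Nat.add_comm]
        exact Finset.card_filter_add_card_filter_not (p := fun S => a ∈ S)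
      have hwcard0 : W.card ≤ U0.card := Finset.card_le_card Finset.inter_subset_left
      have hwcard1 : W.card ≤ U1.card := Finset.card_le_card Finset.inter_subset_right
      -- the cube set
      set S : Finset (Finset (Fin d) × Finset (Fin d)) :=
        Finset.univ.filter (fun p : Finset (Fin d) × Finset (Fin d) =>
          Disjoint p.1 p.2 ∧ p.2.card = k + 1 ∧ ∀ T ∈ p.2.powerset, p.1 ∪ T ∈ U)
        with hSdef
      have hNum : numCubes d (k + 1) U = S.card := rfl
      set T2 : Finset (Finset (Fin d) × Finset (Fin d)) :=
        S.filter (fun p => a ∉ p.2) with hT2def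
      have split1 : S.card = (S.filter (fun p => a ∈ p.2)).card + T2.card := by
        rw [hT2def]
        exact (Finset.card_filter_add_card_filter_not (s := S)
          (p := fun q : Finset (Fin d) × Finset (Fin d) => a ∈ q.2)).symm
      have split2 : T2.card =
          (T2.filter (fun p => a ∈ p.1)).card + (T2.filter (fun p => a ∉ p.1)).card := by
        exact (Finset.card_filter_add_card_filter_not (s := T2)
          (p := fun q : Finset (Fin d) × Finset (Fin d) => a ∈ q.1)).symm
      -- bound 1 : cubes avoiding a entirely
      have b1 : (T2.filter (fun p => a ∉ p.1)).card ≤ numCubes d (k + 1) U0 := by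
        unfold numCubes
        apply Finset.card_le_card_of_injOn (fun p => p)
        · intro p hp
          simp only [hT2def, hSdef, Finset.mem_coe, Finset.mem_filter, Finset.mem_univ, true_and] at hp
          obtain ⟨⟨⟨hdisj, hcard, hall⟩, ha2⟩, ha1⟩ := hp
          simp only [Finset.mem_coe, Finset.mem_filter, Finset.mem_univ, true_and]
          refine ⟨hdisj, hcard, fun T hT => ?_⟩
          rw [hU0def, Finset.mem_filter]
          refine ⟨hall T hT, ?_⟩
          rw [Finset.mem_union]
          rintro (h | h)
          · exact ha1 h
          · exact ha2 (Finset.mem_powerset.mp hT h)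
        · exact fun p _ q _ h => h
      -- bound 2 : cubes with a in the base
      have b2 : (T2.filter (fun p => a ∈ p.1)).card ≤ numCubes d (k + 1) U1 := by
        unfold numCubes
        apply Finset.card_le_card_of_injOn (fun p => (p.1.erase a, p.2))
        · intro p hp
          simp only [hT2def, hSdef, Finset.mem_coe, Finset.mem_filter, Finset.mem_univ, true_and] at hp
          obtain ⟨⟨⟨hdisj, hcard, hall⟩, ha2⟩, ha1⟩ := hp
          simp only [Finset.mem_coe, Finset.mem_filter, Finset.mem_univ, true_and]
          refine ⟨hdisj.mono_left (Finset.erase_subset _ _), hcard, fun T hT => ?_⟩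
          have haT : a ∉ T := fun h => ha2 (Finset.mem_powerset.mp hT h)
          have heq : (p.1 ∪ T).erase a = p.1.erase a ∪ T := by
            rw [Finset.erase_union_distrib, Finset.erase_eq_of_notMem haT]
          rw [hU1def, ← heq]
          exact Finset.mem_image_of_mem _
            (Finset.mem_filter.mpr ⟨hall T hT, Finset.mem_union_left _ ha1⟩)
        · intro p hp q hq h
          simp only [hT2def, hSdef, Finset.mem_coe, Finset.mem_filter, Finset.mem_univ,
            true_and] at hp hq
          have h' : (p.1.erase a, p.2) = (q.1.erase a, q.2) := h
          rw [Prod.mk.injEq] at h'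
          obtain ⟨h1, h2⟩ := h'
          have hp1 : a ∈ p.1 := hp.2
          have hq1 : a ∈ q.1 := hq.2
          refine Prod.ext ?_ h2
          rw [← Finset.insert_erase hp1, ← Finset.insert_erase hq1, h1]
      -- bound 3 : spanning cubes
      have b3 : (S.filter (fun p => a ∈ p.2)).card ≤ numCubes d k W := by
        unfold numCubes
        apply Finset.card_le_card_of_injOn (fun p => (p.1, p.2.erase a))
        · intro p hp
          simp only [hSdef, Finset.mem_coe, Finset.mem_filter, Finset.mem_univ, true_and] at hp
          obtain ⟨⟨hdisj, hcard, hall⟩, ha2⟩ := hp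
          have ha1 : a ∉ p.1 := Finset.disjoint_right.mp hdisj ha2
          simp only [Finset.mem_coe, Finset.mem_filter, Finset.mem_univ, true_and]
          refine ⟨hdisj.mono_right (Finset.erase_subset _ _), ?_, fun T hT => ?_⟩
          · rw [Finset.card_erase_of_mem ha2, hcard]; omega
          · have hTsub : T ⊆ p.2.erase a := Finset.mem_powerset.mp hT
            have haT : a ∉ T := fun h => Finset.notMem_erase a p.2 (hTsub h)
            have hTp2 : T ⊆ p.2 := hTsub.trans (Finset.erase_subset _ _)
            rw [hWdef, Finset.mem_inter]
            constructor
            · rw [hU0def, Finset.mem_filter]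
              refine ⟨hall T (Finset.mem_powerset.mpr hTp2), ?_⟩
              rw [Finset.mem_union]
              rintro (h | h)
              · exact ha1 h
              · exact haT h
            · rw [hU1def, Finset.mem_image]
              refine ⟨p.1 ∪ insert a T, Finset.mem_filter.mpr ⟨?_, ?_⟩, ?_⟩
              · exact hall _ (Finset.mem_powerset.mpr
                  (Finset.insert_subset ha2 hTp2))
              · exact Finset.mem_union_right _ (Finset.mem_insert_self a T)
              · rw [Finset.erase_union_distrib, Finset.erase_eq_of_notMem ha1,
                  Finset.erase_insert haT]
        · intro p hp q hq h
          simp only [hSdef, Finset.mem_coe, Finset.mem_filter, Finset.mem_univ,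
            true_and] at hp hq
          have h' : (p.1, p.2.erase a) = (q.1, q.2.erase a) := h
          rw [Prod.mk.injEq] at h'
          obtain ⟨h1, h2⟩ := h'
          refine Prod.ext h1 ?_
          rw [← Finset.insert_erase hp.2, ← Finset.insert_erase hq.2, h2]
      -- put it together
      have i0 : numCubes d (k + 1) U0 ≤ gc U0.card (k + 1) := ih U0 hU0 (k + 1)
      have i1 : numCubes d (k + 1) U1 ≤ gc U1.card (k + 1) := ih U1 hU1 (k + 1)
      have iw : numCubes d k W ≤ gc W.card k := ih W hW k
      clear hcard1
      have htotal : numCubes d (k + 1) U ≤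
          gc U0.card (k + 1) + gc U1.card (k + 1) + gc W.card k := by
        calc numCubes d (k + 1) U
            = (S.filter (fun p => a ∈ p.2)).card +
              ((T2.filter (fun p => a ∈ p.1)).card + (T2.filter (fun p => a ∉ p.1)).card) := by
              rw [hNum, split1, split2]
          _ ≤ numCubes d k W + (numCubes d (k + 1) U1 + numCubes d (k + 1) U0) :=
              add_le_add b3 (add_le_add b2 b1)
          _ ≤ gc W.card k + (gc U1.card (k + 1) + gc U0.card (k + 1)) :=
              add_le_add iw (add_le_add i1 i0)
          _ = gc U0.card (k + 1) + gc U1.card (k + 1) + gc W.card k := by ring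
      rcases le_total U1.card U0.card with hle | hle
      · have hwmono : gc W.card k ≤ gc U1.card k := gc_mono k hwcard1
        have hsup := gc_superadd k U0.card U1.card hle
        rw [← hcardsum]
        omega
      · have hwmono : gc W.card k ≤ gc U0.card k := gc_mono k hwcard0
        have hsup := gc_superadd k U1.card U0.card hle
        have hcomm : U1.card + U0.card = U.card := by omega
        rw [← hcomm]
        omega

theorem numCubes_upper_bound (d d' n : ℕ) (hd : d' ≤ d)
    (U : Finset (Finset (Fin d))) (hU : U.card = n) :
    (numCubes d d' U : ℝ) ≤ (n : ℝ) / 2 ^ d' * ((Nat.clog 2 n + 1).choose d' : ℝ) := by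
  have h1 : numCubes d d' U ≤ gc n d' := by
    rw [← hU]
    exact numCubes_le_gc d Finset.univ U (fun S _ => Finset.subset_univ S) d'
  have h2 : 2 ^ d' * gc n d' ≤ n * Nat.choose (Nat.clog 2 n + 1) d' :=
    gc_bound (Nat.clog 2 n) n d' (Nat.le_pow_clog (by norm_num) n)
  have h3 : (numCubes d d' U : ℝ) * 2 ^ d' ≤ (n : ℝ) * ((Nat.clog 2 n + 1).choose d' : ℝ) := by
    have hh : numCubes d d' U * 2 ^ d' ≤ n * Nat.choose (Nat.clog 2 n + 1) d' := by
      calc numCubes d d' U * 2 ^ d' = 2 ^ d' * numCubes d d' U := by ring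
        _ ≤ 2 ^ d' * gc n d' := Nat.mul_le_mul_left _ h1
        _ ≤ n * Nat.choose (Nat.clog 2 n + 1) d' := h2
    exact_mod_cast hh
  rw [div_mul_eq_mul_div, le_div_iff₀ (by positivity : (0:ℝ) < 2 ^ d')]
  exact h3
end

section
/- Let U, I ⊆ V(Q_d) with |U| = |I| where I is an initial segment of the binary order on subsets of [d]. Then for any d' ≤ d, the number of d'-dimensional subcubes contained in U is at most the number contained in I. -/
open SimpleGraph Finset Matrix

/-- The binary order on subsets of `[d]`: `S < T` iff `max (S △ T) ∈ T`. -/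
def binLt (d : ℕ) (S T : Finset (Fin d)) : Prop :=
  ∃ a ∈ symmDiff S T, a ∈ T ∧ ∀ b ∈ symmDiff S T, b ≤ a

variable {d : ℕ}

def sg (S : Finset (Fin d)) : Finset (Fin (d+1)) := S.map (Fin.succEmb d)

def tg (S : Finset (Fin (d+1))) : Finset (Fin d) := univ.filter (fun i => i.succ ∈ S)

@[simp] lemma mem_tg {S : Finset (Fin (d+1))} {i : Fin d} : i ∈ tg S ↔ i.succ ∈ S := by
  simp [tg]

@[simp] lemma succ_mem_sg {S : Finset (Fin d)} {i : Fin d} : i.succ ∈ sg S ↔ i ∈ S := by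
  simp [sg, Fin.succEmb]

lemma ne_zero_of_mem_sg {S : Finset (Fin d)} {j : Fin (d+1)} (h : j ∈ sg S) : j ≠ 0 := by
  simp [sg, Fin.succEmb] at h
  rcases h with ⟨i, _, rfl⟩
  exact Fin.succ_ne_zero i

lemma zero_not_mem_sg (S : Finset (Fin d)) : (0 : Fin (d+1)) ∉ sg S :=
  fun h => ne_zero_of_mem_sg h rfl

@[simp] lemma tg_sg (S : Finset (Fin d)) : tg (sg S) = S := by
  ext i; simp

lemma sg_tg (S : Finset (Fin (d+1))) : sg (tg S) = S.erase 0 := by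
  ext j
  induction j using Fin.cases with
  | zero => simp [zero_not_mem_sg]
  | succ i => simp [Fin.succ_ne_zero]

lemma sg_tg_of_not_mem {S : Finset (Fin (d+1))} (h : (0 : Fin (d+1)) ∉ S) : sg (tg S) = S := by
  rw [sg_tg, erase_eq_of_notMem h]

lemma card_sg (S : Finset (Fin d)) : (sg S).card = S.card := card_map _

lemma sg_union (s t : Finset (Fin d)) : sg (s ∪ t) = sg s ∪ sg t := map_union _ _

lemma sg_subset {s t : Finset (Fin d)} : sg s ⊆ sg t ↔ s ⊆ t := map_subset_map

lemma disjoint_sg {s t : Finset (Fin d)} : Disjoint (sg s) (sg t) ↔ Disjoint s t :=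
  disjoint_map _

lemma tg_mono {S S' : Finset (Fin (d+1))} (h : S ⊆ S') : tg S ⊆ tg S' := by
  intro i hi; simp at hi ⊢; exact h hi

lemma disjoint_tg {S S' : Finset (Fin (d+1))} (h : Disjoint S S') :
    Disjoint (tg S) (tg S') := by
  rw [Finset.disjoint_left] at h ⊢
  intro i hi hi'
  exact h (mem_tg.1 hi) (mem_tg.1 hi')

lemma subset_sg {B : Finset (Fin d)} {T : Finset (Fin (d+1))} (h : T ⊆ sg B) :
    T = sg (tg T) ∧ tg T ⊆ B := by
  have h0 : (0 : Fin (d+1)) ∉ T := fun hc => zero_not_mem_sg B (h hc)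
  refine ⟨(sg_tg_of_not_mem h0).symm, ?_⟩
  have := tg_mono h
  rwa [tg_sg] at this

lemma tg_insert_zero (S : Finset (Fin (d+1))) : tg (insert 0 S) = tg S := by
  ext i; simp [Fin.succ_ne_zero]

def half0 (U : Finset (Finset (Fin (d+1)))) : Finset (Finset (Fin d)) :=
  univ.filter (fun s => sg s ∈ U)

def half1 (U : Finset (Finset (Fin (d+1)))) : Finset (Finset (Fin d)) :=
  univ.filter (fun s => insert 0 (sg s) ∈ U)

@[simp] lemma mem_half0 {U : Finset (Finset (Fin (d+1)))} {s : Finset (Fin d)} :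
    s ∈ half0 U ↔ sg s ∈ U := by simp [half0]

@[simp] lemma mem_half1 {U : Finset (Finset (Fin (d+1)))} {s : Finset (Fin d)} :
    s ∈ half1 U ↔ insert 0 (sg s) ∈ U := by simp [half1]

lemma card_split (U : Finset (Finset (Fin (d+1)))) :
    U.card = (half0 U).card + (half1 U).card := by
  classical
  rw [← card_filter_add_card_filter_not (s := U) (p := fun S => (0 : Fin (d+1)) ∈ S)]
  have e1 : (U.filter (fun S => (0 : Fin (d+1)) ∈ S)).card = (half1 U).card := by
    apply card_bij' (fun S _ => tg S) (fun s _ => insert 0 (sg s))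
    · intro S hS
      simp only [mem_filter] at hS
      rw [mem_half1, sg_tg, insert_erase hS.2]
      exact hS.1
    · intro s hs
      rw [mem_half1] at hs
      simp [hs]
    · intro S hS
      simp only [mem_filter] at hS
      rw [sg_tg, insert_erase hS.2]
    · intro s _
      rw [tg_insert_zero, tg_sg]
  have e2 : (U.filter (fun S => ¬ (0 : Fin (d+1)) ∈ S)).card = (half0 U).card := by
    apply card_bij' (fun S _ => tg S) (fun s _ => sg s)
    · intro S hS
      simp only [mem_filter] at hS
      rw [mem_half0, sg_tg_of_not_mem hS.2]
      exact hS.1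
    · intro s hs
      rw [mem_half0] at hs
      simp [hs, zero_not_mem_sg]
    · intro S hS
      simp only [mem_filter] at hS
      exact sg_tg_of_not_mem hS.2
    · intro s _
      rw [tg_sg]
  omega

lemma numCubes_zero (d : ℕ) (U : Finset (Finset (Fin d))) : numCubes d 0 U = U.card := by
  classical
  unfold numCubes
  apply card_bij' (fun p _ => p.1) (fun S _ => (S, (∅ : Finset (Fin d))))
  case hi =>
    intro p hp
    simp only [mem_filter, card_eq_zero, mem_univ, true_and] at hp
    obtain ⟨-, h2, h3⟩ := hp
    have := h3 ∅ (by simp)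
    simpa using this
  case hj =>
    intro S hS
    simp only [mem_filter, mem_univ, true_and]
    refine ⟨disjoint_empty_right _, rfl, ?_⟩
    intro T hT
    simp only [powerset_empty, mem_singleton] at hT
    subst hT
    simpa using hS
  case left_inv =>
    intro p hp
    simp only [mem_filter, card_eq_zero, mem_univ, true_and] at hp
    obtain ⟨-, h2, -⟩ := hp
    exact Prod.ext rfl h2.symm
  case right_inv =>
    intro S _
    rfl

lemma subset_insert_sg {B : Finset (Fin d)} {T : Finset (Fin (d+1))}
    (h : T ⊆ insert 0 (sg B)) :
    tg T ⊆ B ∧ (T = sg (tg T) ∨ T = insert 0 (sg (tg T))) := by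
  constructor
  · have := tg_mono h
    rwa [tg_insert_zero, tg_sg] at this
  · rcases Decidable.em ((0 : Fin (d+1)) ∈ T) with h0 | h0
    · right; rw [sg_tg, insert_erase h0]
    · left; rw [sg_tg_of_not_mem h0]

lemma numCubes_succ (d k : ℕ) (U : Finset (Finset (Fin (d+1)))) :
    numCubes (d+1) (k+1) U =
      numCubes d (k+1) (half0 U) + numCubes d (k+1) (half1 U) +
        numCubes d k (half0 U ∩ half1 U) := by
  classical
  unfold numCubes
  set A := (Finset.univ.filter (fun p : Finset (Fin (d+1)) × Finset (Fin (d+1)) =>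
    Disjoint p.1 p.2 ∧ p.2.card = k+1 ∧ ∀ T ∈ p.2.powerset, p.1 ∪ T ∈ U)) with hA
  have hsplit1 := card_filter_add_card_filter_not (s := A)
    (p := fun p => (0 : Fin (d+1)) ∈ p.1)
  have hsplit2 := card_filter_add_card_filter_not
    (s := A.filter (fun p => ¬ (0 : Fin (d+1)) ∈ p.1))
    (p := fun p => (0 : Fin (d+1)) ∈ p.2)
  -- E1 : pairs with 0 ∈ A-part  ↔  cubes of half1
  have E1 : (A.filter (fun p => (0 : Fin (d+1)) ∈ p.1)).card =
      (Finset.univ.filter (fun q : Finset (Fin d) × Finset (Fin d) =>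
        Disjoint q.1 q.2 ∧ q.2.card = k+1 ∧ ∀ T ∈ q.2.powerset, q.1 ∪ T ∈ half1 U)).card := by
    apply card_bij' (fun p _ => (tg p.1, tg p.2))
      (fun q _ => (insert 0 (sg q.1), sg q.2))
    case hi =>
      intro p hp
      simp only [hA, mem_filter, mem_univ, true_and] at hp ⊢
      obtain ⟨⟨hdis, hcard, hcond⟩, h01⟩ := hp
      have h02 : (0 : Fin (d+1)) ∉ p.2 := fun hc => (Finset.disjoint_left.1 hdis h01) hc
      refine ⟨disjoint_tg hdis, ?_, ?_⟩
      · rw [← card_sg, sg_tg_of_not_mem h02, hcard]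
      · intro t ht
        rw [mem_powerset] at ht
        rw [mem_half1]
        have hsub : sg t ⊆ p.2 := by
          rw [← sg_tg_of_not_mem h02]; exact sg_subset.2 ht
        have := hcond (sg t) (mem_powerset.2 hsub)
        have heq : insert 0 (sg (tg p.1 ∪ t)) = p.1 ∪ sg t := by
          rw [sg_union, sg_tg, ← insert_union, insert_erase h01]
        rwa [heq]
    case hj =>
      intro q hq
      simp only [mem_filter, mem_univ, true_and] at hq
      obtain ⟨hdis, hcard, hcond⟩ := hq
      simp only [hA, mem_filter, mem_univ, true_and]
      refine ⟨⟨?_, ?_, ?_⟩, mem_insert_self _ _⟩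
      · rw [disjoint_insert_left]
        exact ⟨zero_not_mem_sg _, disjoint_sg.2 hdis⟩
      · rw [card_sg, hcard]
      · intro T hT
        rw [mem_powerset] at hT
        obtain ⟨hTeq, htsub⟩ := subset_sg hT
        have := hcond (tg T) (mem_powerset.2 htsub)
        rw [mem_half1] at this
        have heq : insert 0 (sg q.1) ∪ T = insert 0 (sg (q.1 ∪ tg T)) := by
          rw [sg_union, insert_union, ← hTeq]
        rwa [heq]
    case left_inv =>
      intro p hp
      simp only [hA, mem_filter, mem_univ, true_and] at hp
      obtain ⟨⟨hdis, hcard, hcond⟩, h01⟩ := hp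
      have h02 : (0 : Fin (d+1)) ∉ p.2 := fun hc => (Finset.disjoint_left.1 hdis h01) hc
      refine Prod.ext ?_ ?_
      · show insert 0 (sg (tg p.1)) = p.1
        rw [sg_tg, insert_erase h01]
      · show sg (tg p.2) = p.2
        exact sg_tg_of_not_mem h02
    case right_inv =>
      intro q _
      refine Prod.ext ?_ ?_
      · show tg (insert 0 (sg q.1)) = q.1
        rw [tg_insert_zero, tg_sg]
      · show tg (sg q.2) = q.2
        rw [tg_sg]
  -- E2 : pairs with 0 ∉ A-part, 0 ∈ B-part  ↔  (k)-cubes of half0 ∩ half1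
  have E2 : ((A.filter (fun p => ¬ (0 : Fin (d+1)) ∈ p.1)).filter
      (fun p => (0 : Fin (d+1)) ∈ p.2)).card =
      (Finset.univ.filter (fun q : Finset (Fin d) × Finset (Fin d) =>
        Disjoint q.1 q.2 ∧ q.2.card = k ∧ ∀ T ∈ q.2.powerset,
          q.1 ∪ T ∈ half0 U ∩ half1 U)).card := by
    apply card_bij' (fun p _ => (tg p.1, tg p.2))
      (fun q _ => (sg q.1, insert 0 (sg q.2)))
    case hi =>
      intro p hp
      simp only [hA, mem_filter, mem_univ, true_and] at hp ⊢
      obtain ⟨⟨⟨hdis, hcard, hcond⟩, h01⟩, h02⟩ := hp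
      refine ⟨disjoint_tg hdis, ?_, ?_⟩
      · have : (sg (tg p.2)).card = k := by
          rw [sg_tg, card_erase_of_mem h02, hcard]
          omega
        rwa [card_sg] at this

      · intro t ht
        rw [mem_powerset] at ht
        have hsub : sg t ⊆ p.2 := by
          calc sg t ⊆ sg (tg p.2) := sg_subset.2 ht
          _ = p.2.erase 0 := sg_tg _
          _ ⊆ p.2 := erase_subset _ _
        rw [mem_inter, mem_half0, mem_half1]
        constructor
        · have := hcond (sg t) (mem_powerset.2 hsub)
          have heq : sg (tg p.1 ∪ t) = p.1 ∪ sg t := by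
            rw [sg_union, sg_tg_of_not_mem h01]
          rwa [heq]
        · have hsub2 : insert 0 (sg t) ⊆ p.2 := insert_subset h02 hsub
          have := hcond _ (mem_powerset.2 hsub2)
          have heq : insert 0 (sg (tg p.1 ∪ t)) = p.1 ∪ insert 0 (sg t) := by
            rw [sg_union, sg_tg_of_not_mem h01, union_insert]
          rwa [heq]
    case hj =>
      intro q hq
      simp only [mem_filter, mem_univ, true_and] at hq
      obtain ⟨hdis, hcard, hcond⟩ := hq
      simp only [hA, mem_filter, mem_univ, true_and]
      refine ⟨⟨⟨?_, ?_, ?_⟩, zero_not_mem_sg _⟩, mem_insert_self _ _⟩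
      · rw [disjoint_insert_right]
        exact ⟨zero_not_mem_sg _, disjoint_sg.2 hdis⟩
      · rw [card_insert_of_notMem (zero_not_mem_sg _), card_sg, hcard]
      · intro T hT
        rw [mem_powerset] at hT
        obtain ⟨htsub, hcases⟩ := subset_insert_sg hT
        have hmem := hcond (tg T) (mem_powerset.2 htsub)
        rw [mem_inter, mem_half0, mem_half1] at hmem
        rcases hcases with hT0 | hT0
        · have heq : sg q.1 ∪ T = sg (q.1 ∪ tg T) := by
            rw [sg_union, ← hT0]
          rw [heq]; exact hmem.1
        · have heq : sg q.1 ∪ T = insert 0 (sg (q.1 ∪ tg T)) := by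
            nth_rewrite 1 [hT0]
            rw [union_insert, ← sg_union]
          rw [heq]; exact hmem.2
    case left_inv =>
      intro p hp
      simp only [hA, mem_filter, mem_univ, true_and] at hp
      obtain ⟨⟨⟨hdis, hcard, hcond⟩, h01⟩, h02⟩ := hp
      refine Prod.ext ?_ ?_
      · show sg (tg p.1) = p.1
        exact sg_tg_of_not_mem h01
      · show insert 0 (sg (tg p.2)) = p.2
        rw [sg_tg, insert_erase h02]
    case right_inv =>
      intro q _
      refine Prod.ext ?_ ?_
      · show tg (sg q.1) = q.1
        rw [tg_sg]
      · show tg (insert 0 (sg q.2)) = q.2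
        rw [tg_insert_zero, tg_sg]
  -- E3 : pairs avoiding 0 entirely  ↔  cubes of half0
  have E3 : ((A.filter (fun p => ¬ (0 : Fin (d+1)) ∈ p.1)).filter
      (fun p => ¬ (0 : Fin (d+1)) ∈ p.2)).card =
      (Finset.univ.filter (fun q : Finset (Fin d) × Finset (Fin d) =>
        Disjoint q.1 q.2 ∧ q.2.card = k+1 ∧ ∀ T ∈ q.2.powerset, q.1 ∪ T ∈ half0 U)).card := by
    apply card_bij' (fun p _ => (tg p.1, tg p.2)) (fun q _ => (sg q.1, sg q.2))
    case hi =>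
      intro p hp
      simp only [hA, mem_filter, mem_univ, true_and] at hp ⊢
      obtain ⟨⟨⟨hdis, hcard, hcond⟩, h01⟩, h02⟩ := hp
      refine ⟨disjoint_tg hdis, ?_, ?_⟩
      · rw [← card_sg, sg_tg_of_not_mem h02, hcard]
      · intro t ht
        rw [mem_powerset] at ht
        rw [mem_half0]
        have hsub : sg t ⊆ p.2 := by
          rw [← sg_tg_of_not_mem h02]; exact sg_subset.2 ht
        have := hcond (sg t) (mem_powerset.2 hsub)
        have heq : sg (tg p.1 ∪ t) = p.1 ∪ sg t := by
          rw [sg_union, sg_tg_of_not_mem h01]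
        rwa [heq]
    case hj =>
      intro q hq
      simp only [mem_filter, mem_univ, true_and] at hq
      obtain ⟨hdis, hcard, hcond⟩ := hq
      simp only [hA, mem_filter, mem_univ, true_and]
      refine ⟨⟨⟨?_, ?_, ?_⟩, zero_not_mem_sg _⟩, zero_not_mem_sg _⟩
      · exact disjoint_sg.2 hdis
      · rw [card_sg, hcard]
      · intro T hT
        rw [mem_powerset] at hT
        obtain ⟨hTeq, htsub⟩ := subset_sg hT
        have := hcond (tg T) (mem_powerset.2 htsub)
        rw [mem_half0] at this
        have heq : sg q.1 ∪ T = sg (q.1 ∪ tg T) := by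
          rw [sg_union, ← hTeq]
        rwa [heq]
    case left_inv =>
      intro p hp
      simp only [hA, mem_filter, mem_univ, true_and] at hp
      obtain ⟨⟨⟨hdis, hcard, hcond⟩, h01⟩, h02⟩ := hp
      exact Prod.ext (sg_tg_of_not_mem h01) (sg_tg_of_not_mem h02)
    case right_inv =>
      intro q _
      exact Prod.ext (tg_sg _) (tg_sg _)
  omega

def IsInit (d : ℕ) (I : Finset (Finset (Fin d))) : Prop :=
  ∀ T ∈ I, ∀ S, binLt d S T → S ∈ I

lemma binLt_total {S T : Finset (Fin d)} (h : S ≠ T) : binLt d S T ∨ binLt d T S := by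
  classical
  have hne : (symmDiff S T).Nonempty := by
    rw [nonempty_iff_ne_empty]
    intro hc
    exact h (symmDiff_eq_bot.1 hc)
  set a := (symmDiff S T).max' hne with ha
  have hmem : a ∈ symmDiff S T := max'_mem _ _
  have hle : ∀ b ∈ symmDiff S T, b ≤ a := fun b hb => le_max' _ _ hb
  rcases mem_symmDiff.1 hmem with ⟨haS, haT⟩ | ⟨haT, haS⟩
  · right
    refine ⟨a, ?_, haS, ?_⟩
    · rwa [symmDiff_comm]
    · intro b hb; rw [symmDiff_comm] at hb; exact hle b hb
  · left
    exact ⟨a, hmem, haT, hle⟩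

lemma sg_symmDiff (s t : Finset (Fin d)) :
    sg (symmDiff s t) = symmDiff (sg s) (sg t) := by
  ext j
  induction j using Fin.cases with
  | zero => simp [zero_not_mem_sg, mem_symmDiff, zero_not_mem_sg s, zero_not_mem_sg t]
  | succ i => simp [mem_symmDiff]

lemma mem_sg_elim {X : Finset (Fin d)} {b : Fin (d+1)} (h : b ∈ sg X) :
    ∃ i ∈ X, b = i.succ := by
  induction b using Fin.cases with
  | zero => exact absurd h (zero_not_mem_sg X)
  | succ i => exact ⟨i, succ_mem_sg.1 h, rfl⟩

lemma binLt_sg {s t : Finset (Fin d)} (h : binLt d s t) :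
    binLt (d+1) (sg s) (sg t) := by
  obtain ⟨a, ha, hat, hmax⟩ := h
  refine ⟨a.succ, ?_, succ_mem_sg.2 hat, ?_⟩
  · rw [← sg_symmDiff]; exact succ_mem_sg.2 ha
  · intro b hb
    rw [← sg_symmDiff] at hb
    obtain ⟨i, hi, rfl⟩ := mem_sg_elim hb
    exact Fin.succ_le_succ_iff.2 (hmax i hi)

lemma symmDiff_insert_zero (X Y : Finset (Fin (d+1))) (hX : (0:Fin (d+1)) ∉ X)
    (hY : (0:Fin (d+1)) ∉ Y) :
    symmDiff (insert 0 X) (insert 0 Y) = symmDiff X Y := by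
  ext j
  by_cases hj : j = 0
  · subst hj
    simp [mem_symmDiff, hX, hY]
  · simp [mem_symmDiff, mem_insert, hj]

lemma binLt_insert {s t : Finset (Fin d)} (h : binLt d s t) :
    binLt (d+1) (insert 0 (sg s)) (insert 0 (sg t)) := by
  obtain ⟨a, ha, hat, hmax⟩ := binLt_sg h
  unfold binLt
  rw [symmDiff_insert_zero _ _ (zero_not_mem_sg s) (zero_not_mem_sg t)]
  exact ⟨a, ha, mem_insert_of_mem hat, hmax⟩

lemma binLt_self_insert (s : Finset (Fin d)) :
    binLt (d+1) (sg s) (insert 0 (sg s)) := by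
  have hsd : symmDiff (sg s) (insert 0 (sg s)) = {0} := by
    ext j
    by_cases hj : j = 0
    · subst hj
      simp [mem_symmDiff, zero_not_mem_sg s]
    · simp only [mem_symmDiff, mem_insert, mem_singleton, hj]
      tauto
  unfold binLt
  rw [hsd]
  exact ⟨0, mem_singleton_self 0, mem_insert_self 0 _, fun b hb => by
    rw [mem_singleton] at hb; exact hb.le⟩

lemma binLt_insert_left {s t : Finset (Fin d)} (h : binLt (d+1) (sg s) (sg t)) :
    binLt (d+1) (insert 0 (sg s)) (sg t) := by
  obtain ⟨a, ha, hat, hmax⟩ := h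
  have hsd : symmDiff (insert 0 (sg s)) (sg t) = insert 0 (symmDiff (sg s) (sg t)) := by
    ext j
    by_cases hj : j = 0
    · subst hj
      simp [mem_symmDiff, zero_not_mem_sg s, zero_not_mem_sg t]
    · simp [mem_symmDiff, mem_insert, hj]
  unfold binLt
  rw [hsd]
  refine ⟨a, mem_insert_of_mem ha, hat, ?_⟩
  intro b hb
  rcases mem_insert.1 hb with rfl | hb'
  · exact Fin.zero_le a
  · exact hmax b hb'

lemma sg_injective : Function.Injective (sg (d := d)) := by
  intro s t h
  have := congrArg tg h
  rwa [tg_sg, tg_sg] at this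

lemma isInit_half0 {I : Finset (Finset (Fin (d+1)))} (hI : IsInit (d+1) I) :
    IsInit d (half0 I) := by
  intro t ht s hs
  rw [mem_half0] at ht ⊢
  exact hI _ ht _ (binLt_sg hs)

lemma isInit_half1 {I : Finset (Finset (Fin (d+1)))} (hI : IsInit (d+1) I) :
    IsInit d (half1 I) := by
  intro t ht s hs
  rw [mem_half1] at ht ⊢
  exact hI _ ht _ (binLt_insert hs)

lemma half1_subset_half0 {I : Finset (Finset (Fin (d+1)))} (hI : IsInit (d+1) I) :
    half1 I ⊆ half0 I := by
  intro s hs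
  rw [mem_half1] at hs
  rw [mem_half0]
  exact hI _ hs _ (binLt_self_insert s)

lemma half_sdiff_card {I : Finset (Finset (Fin (d+1)))} (hI : IsInit (d+1) I) :
    (half0 I \ half1 I).card ≤ 1 := by
  rw [card_le_one]
  intro s hs t ht
  by_contra hne
  rw [mem_sdiff, mem_half0, mem_half1] at hs ht
  have hsgne : sg s ≠ sg t := fun hc => hne (sg_injective hc)
  rcases binLt_total hsgne with h | h
  · exact hs.2 (hI _ ht.1 _ (binLt_insert_left h))
  · exact ht.2 (hI _ hs.1 _ (binLt_insert_left h))

lemma half_cards {I : Finset (Finset (Fin (d+1)))} (hI : IsInit (d+1) I) :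
    (half0 I).card = (I.card + 1) / 2 ∧ (half1 I).card = I.card / 2 := by
  have h1 := half1_subset_half0 hI
  have h2 := card_split I
  have h3 := card_sdiff_add_card_eq_card h1
  have h4 := half_sdiff_card hI
  omega

def T : ℕ → ℕ → ℕ
  | 0, n => n
  | _+1, 0 => 0
  | _+1, 1 => 0
  | k+1, (n+2) => T (k+1) ((n+3)/2) + T (k+1) ((n+2)/2) + T k ((n+2)/2)
termination_by k n => (k, n)
decreasing_by
  all_goals first
    | (apply Prod.Lex.right; omega)
    | (apply Prod.Lex.left; omega)

lemma T_zero (n : ℕ) : T 0 n = n := by simp [T]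

lemma T_nil (k : ℕ) : T k 0 = 0 := by cases k <;> simp [T]

lemma T_one (k : ℕ) : T (k+1) 1 = 0 := by simp [T]

lemma T_rec (k n : ℕ) : T (k+1) n = T (k+1) ((n+1)/2) + T (k+1) (n/2) + T k ((n/2)) := by
  match n with
  | 0 => norm_num [T_nil]
  | 1 => norm_num [T_nil, T_one]
  | n+2 => rw [T]

lemma T_le_succ : ∀ n k, T k n ≤ T k (n+1) := by
  intro n
  induction n using Nat.strong_induction_on with
  | _ n IH =>
    intro k
    cases k with
    | zero => simp [T_zero]
    | succ k =>
      match n with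
      | 0 => simp [T_nil]
      | 1 => rw [T_one]; exact Nat.zero_le _
      | (m+2) =>
        have pair : ∀ (x y k' : ℕ), x ≤ y → y ≤ x + 1 → x < m + 2 → T k' x ≤ T k' y := by
          intro x y k' h1 h2 hx
          rcases Nat.eq_or_lt_of_le h1 with h | h
          · rw [h]
          · have : y = x + 1 := by omega
            rw [this]; exact IH x hx k'
        rw [T_rec k (m+2), T_rec k (m+3)]
        have h1 : T (k+1) ((m+2+1)/2) ≤ T (k+1) ((m+3+1)/2) := pair _ _ _ (by omega) (by omega) (by omega)
        have h2 : T (k+1) ((m+2)/2) ≤ T (k+1) ((m+3)/2) := pair _ _ _ (by omega) (by omega) (by omega)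
        have h3 : T k ((m+2)/2) ≤ T k ((m+3)/2) := pair _ _ _ (by omega) (by omega) (by omega)
        omega

lemma T_mono (k : ℕ) {m n : ℕ} (h : m ≤ n) : T k m ≤ T k n := by
  induction h with
  | refl => exact le_rfl
  | step _ ih => exact le_trans ih (T_le_succ _ _)

lemma key : ∀ N k a b, a + b ≤ N → b ≤ a → T (k+1) a + T (k+1) b + T k b ≤ T (k+1) (a+b) := by
  intro N
  induction N using Nat.strong_induction_on with
  | _ N IH =>
  intro k a b hN hba
  rcases Nat.eq_zero_or_pos b with hb | hb
  · subst hb; simp [T_nil]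
  have ha : 1 ≤ a := le_trans hb hba
  have hG1 : T (k+1) ((a+1)/2) + T (k+1) (b/2) + T k (b/2) ≤ T (k+1) ((a+1)/2 + b/2) :=
    IH ((a+1)/2 + b/2) (by omega) k _ _ le_rfl (by omega)
  have hsplit : ((a+1)/2 + b/2 = (a+b+1)/2 ∧ a/2 + (b+1)/2 = (a+b)/2) ∨
      ((a+1)/2 + b/2 = (a+b)/2 ∧ a/2 + (b+1)/2 = (a+b+1)/2) := by omega
  rcases le_or_gt ((b+1)/2) (a/2) with hAB | hAB
  · -- Case A
    have hG2 : T (k+1) (a/2) + T (k+1) ((b+1)/2) + T k ((b+1)/2) ≤ T (k+1) (a/2 + (b+1)/2) :=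
      IH (a/2 + (b+1)/2) (by omega) k _ _ le_rfl hAB
    rw [T_rec k a, T_rec k b, T_rec k (a+b)]
    cases k with
    | zero =>
      simp only [T_zero] at *
      rcases hsplit with ⟨h1, h2⟩ | ⟨h1, h2⟩ <;> rw [h1] at hG1 <;> rw [h2] at hG2 <;> omega
    | succ j =>
      have hL : T (j+1) (a/2) + T (j+1) (b/2) + T j (b/2) ≤ T (j+1) (a/2 + b/2) :=
        IH (a/2 + b/2) (by omega) j _ _ le_rfl (by omega)
      have hL2 : T (j+1) (a/2 + b/2) ≤ T (j+1) ((a+b)/2) := T_mono _ (by omega)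
      rw [T_rec j b]
      rcases hsplit with ⟨h1, h2⟩ | ⟨h1, h2⟩ <;> rw [h1] at hG1 <;> rw [h2] at hG2 <;> omega
  · -- Case B
    have hG2 : T (k+1) ((b+1)/2) + T (k+1) (a/2) + T k (a/2) ≤ T (k+1) ((b+1)/2 + a/2) :=
      IH ((b+1)/2 + a/2) (by omega) k _ _ le_rfl (by omega)
    rw [show (b+1)/2 + a/2 = a/2 + (b+1)/2 by omega] at hG2
    have hL : T k b ≤ T k ((a+b)/2) := T_mono _ (by omega)
    rw [T_rec k a, T_rec k b, T_rec k (a+b)]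
    rcases hsplit with ⟨h1, h2⟩ | ⟨h1, h2⟩ <;> rw [h1] at hG1 <;> rw [h2] at hG2 <;> omega

lemma numCubes_zero_dim (k : ℕ) (U : Finset (Finset (Fin 0))) :
    numCubes 0 (k+1) U = 0 := by
  classical
  unfold numCubes
  rw [card_eq_zero, filter_eq_empty_iff]
  rintro p - ⟨-, hc, -⟩
  have hp2 : p.2 = ∅ := Subsingleton.elim _ _
  rw [hp2] at hc
  simp at hc

lemma upper : ∀ d k (U : Finset (Finset (Fin d))), numCubes d k U ≤ T k U.card := by
  intro d
  induction d with
  | zero =>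
    intro k U
    cases k with
    | zero => rw [numCubes_zero, T_zero]
    | succ k => rw [numCubes_zero_dim]; exact Nat.zero_le _
  | succ d ih =>
    intro k U
    cases k with
    | zero => rw [numCubes_zero, T_zero]
    | succ k =>
      rw [numCubes_succ, card_split U]
      have h0 := ih (k+1) (half0 U)
      have h1 := ih (k+1) (half1 U)
      have h2 := ih k (half0 U ∩ half1 U)
      have hc : (half0 U ∩ half1 U).card ≤ min (half0 U).card (half1 U).card :=
        le_min (card_le_card inter_subset_left) (card_le_card inter_subset_right)
      have h2' : T k (half0 U ∩ half1 U).card ≤ T k (min (half0 U).card (half1 U).card) :=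
        T_mono _ hc
      have hkey : T (k+1) (half0 U).card + T (k+1) (half1 U).card +
          T k (min (half0 U).card (half1 U).card) ≤
          T (k+1) ((half0 U).card + (half1 U).card) := by
        rcases le_total (half1 U).card (half0 U).card with h | h
        · rw [min_eq_right h]
          exact key _ k _ _ le_rfl h
        · rw [min_eq_left h]
          have := key ((half1 U).card + (half0 U).card) k _ _ le_rfl h
          rw [add_comm ((half1 U).card)] at this
          omega
      omega

lemma lower : ∀ d k (I : Finset (Finset (Fin d))), IsInit d I →
    T k I.card ≤ numCubes d k I := by
  intro d
  induction d with
  | zero =>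
    intro k I _
    cases k with
    | zero => rw [numCubes_zero, T_zero]
    | succ k =>
      have hI1 : I.card ≤ 1 := by
        have := card_le_univ I
        simpa using this
      interval_cases h : I.card
      · rw [T_nil]; exact Nat.zero_le _
      · rw [T_one]; exact Nat.zero_le _
  | succ d ih =>
    intro k I hI
    cases k with
    | zero => rw [numCubes_zero, T_zero]
    | succ k =>
      obtain ⟨hc0, hc1⟩ := half_cards hI
      rw [numCubes_succ, inter_eq_right.2 (half1_subset_half0 hI)]
      have h0 := ih (k+1) (half0 I) (isInit_half0 hI)
      have h1 := ih (k+1) (half1 I) (isInit_half1 hI)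
      have h2 := ih k (half1 I) (isInit_half1 hI)
      rw [T_rec k I.card]
      rw [hc0] at h0
      rw [hc1] at h1 h2
      omega


theorem numCubes_le_initial_segment (d d' : ℕ) (hd : d' ≤ d)
    (U I : Finset (Finset (Fin d))) (hcard : U.card = I.card)
    (hI : ∀ T ∈ I, ∀ S, binLt d S T → S ∈ I) :
    numCubes d d' U ≤ numCubes d d' I := by
  exact le_trans (upper d d' U) (le_trans (by rw [hcard]) (lower d d' I hI))
end

section
/- Let G be an induced subgraph of the hypercube Q_d with n ≤ d vertices, where n ≥ 103. Then λ₁(G) ≤ √(n−1), with equality if and only if G is a star K_{1,n−1}. -/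
open SimpleGraph Finset Matrix

open scoped symmDiff

set_option maxHeartbeats 1000000

section Spectral
variable {V : Type*} [Fintype V] [DecidableEq V]

lemma coord_eq (A : Matrix V V ℝ) (hA : A.IsHermitian) (z : V → ℝ) (i : V) :
    hA.eigenvectorBasis.repr (WithLp.toLp 2 z) i = ∑ u, hA.eigenvectorBasis i u * z u := by
  rw [hA.eigenvectorBasis.repr_apply_apply]
  simp [PiLp.inner_apply, mul_comm]

lemma coord_mulVec (A : Matrix V V ℝ) (hA : A.IsHermitian) (z : V → ℝ) (i : V) :
    hA.eigenvectorBasis.repr (WithLp.toLp 2 (A *ᵥ z)) i = hA.eigenvalues i * hA.eigenvectorBasis.repr (WithLp.toLp 2 z) i := by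
  rw [coord_eq, coord_eq]
  have hsymm : ∀ u v, A u v = A v u := fun u v => by
    conv_lhs => rw [← hA]
    simp [Matrix.conjTranspose_apply]
  calc ∑ u, hA.eigenvectorBasis i u * (A *ᵥ z) u
      = ∑ u, ∑ v, hA.eigenvectorBasis i u * (A u v * z v) := by
        simp [Matrix.mulVec, dotProduct, Finset.mul_sum]
    _ = ∑ v, (∑ u, A v u * hA.eigenvectorBasis i u) * z v := by
        rw [Finset.sum_comm]
        congr 1; ext v
        rw [Finset.sum_mul]
        congr 1; ext u
        rw [hsymm u v]; ring
    _ = ∑ v, (hA.eigenvalues i * hA.eigenvectorBasis i v) * z v := by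
        congr 1; ext v
        congr 1
        have := congrFun (hA.mulVec_eigenvectorBasis i) v
        simpa [Matrix.mulVec, dotProduct] using this
    _ = hA.eigenvalues i * ∑ u, hA.eigenvectorBasis i u * z u := by
        rw [Finset.mul_sum]; congr 1; ext v; ring

lemma parseval_sq (A : Matrix V V ℝ) (hA : A.IsHermitian) (z : V → ℝ) :
    ∑ u, z u * z u = ∑ i, hA.eigenvectorBasis.repr (WithLp.toLp 2 z) i * hA.eigenvectorBasis.repr (WithLp.toLp 2 z) i := by
  have key := hA.eigenvectorBasis.repr.inner_map_map (x := (WithLp.toLp 2 z))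
    (y := (WithLp.toLp 2 z))
  have e1 : (@inner ℝ (EuclideanSpace ℝ V) _ (WithLp.toLp 2 z) (WithLp.toLp 2 z))
      = ∑ u, z u * z u := by
    rw [PiLp.inner_apply]; simp [sq]
  have e2 : (@inner ℝ (EuclideanSpace ℝ V) _ (hA.eigenvectorBasis.repr (WithLp.toLp 2 z)) (hA.eigenvectorBasis.repr (WithLp.toLp 2 z)))
      = ∑ i, hA.eigenvectorBasis.repr (WithLp.toLp 2 z) i * hA.eigenvectorBasis.repr (WithLp.toLp 2 z) i := by
    rw [PiLp.inner_apply]; simp [sq]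
  rw [← e1, ← key, e2]

lemma parseval_mixed (A : Matrix V V ℝ) (hA : A.IsHermitian) (z : V → ℝ) :
    ∑ u, z u * (A *ᵥ z) u
      = ∑ i, hA.eigenvalues i * (hA.eigenvectorBasis.repr (WithLp.toLp 2 z) i * hA.eigenvectorBasis.repr (WithLp.toLp 2 z) i) := by
  have key := hA.eigenvectorBasis.repr.inner_map_map (x := (WithLp.toLp 2 z))
    (y := (WithLp.toLp 2 (A *ᵥ z)))
  have e1 : (@inner ℝ (EuclideanSpace ℝ V) _ (WithLp.toLp 2 z) (WithLp.toLp 2 (A *ᵥ z)))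
      = ∑ u, z u * (A *ᵥ z) u := by
    rw [PiLp.inner_apply]; simp [mul_comm]
  have e2 : (@inner ℝ (EuclideanSpace ℝ V) _ (hA.eigenvectorBasis.repr (WithLp.toLp 2 z))
        (hA.eigenvectorBasis.repr (WithLp.toLp 2 (A *ᵥ z))))
      = ∑ i, hA.eigenvectorBasis.repr (WithLp.toLp 2 z) i * hA.eigenvectorBasis.repr (WithLp.toLp 2 (A *ᵥ z)) i := by
    rw [PiLp.inner_apply]; simp [mul_comm]
  rw [← e1, ← key, e2]
  congr 1; ext i
  rw [coord_mulVec]; ring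

lemma eigen_reconstruct (A : Matrix V V ℝ) (hA : A.IsHermitian) (z : V → ℝ) (l : ℝ)
    (h : ∀ i, hA.eigenvalues i ≠ l → hA.eigenvectorBasis.repr (WithLp.toLp 2 z) i = 0) :
    A *ᵥ z = l • z := by
  have : hA.eigenvectorBasis.repr (WithLp.toLp 2 (A *ᵥ z))
      = hA.eigenvectorBasis.repr (WithLp.toLp 2 (l • z)) := by
    ext i
    rw [coord_mulVec]
    by_cases hc : hA.eigenvalues i = l
    all_goals rw [show (WithLp.toLp 2 (l • z)) = l • (WithLp.toLp 2 z)
      from rfl, LinearIsometryEquiv.map_smul]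
    · rw [hc]; rfl
    · rw [h i hc, mul_zero]
      have : (l • hA.eigenvectorBasis.repr (WithLp.toLp 2 z)) i = l * hA.eigenvectorBasis.repr (WithLp.toLp 2 z) i := rfl
      rw [this, h i hc, mul_zero]
  exact congrArg WithLp.ofLp (hA.eigenvectorBasis.repr.injective this)

omit [Fintype V] [DecidableEq V] in
lemma funcoe_ne_zero (b : EuclideanSpace ℝ V) (hb : b ≠ 0) : (⇑b : V → ℝ) ≠ 0 := by
  intro h
  apply hb
  ext u
  exact congrFun h u

lemma eigen_mem (A : Matrix V V ℝ) (hA : A.IsHermitian) (μ : ℝ) :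
    Module.End.HasEigenvalue (Matrix.toLin' A) μ ↔ ∃ i, hA.eigenvalues i = μ := by
  constructor
  · intro h
    obtain ⟨y, hy⟩ := h.exists_hasEigenvector
    have hyv : A *ᵥ y = μ • y := by
      simpa [Matrix.toLin'_apply] using hy.apply_eq_smul
    by_contra hno
    push_neg at hno
    have hz : ∀ i, hA.eigenvectorBasis.repr (WithLp.toLp 2 y) i = 0 := by
      intro i
      have h1 : hA.eigenvectorBasis.repr (WithLp.toLp 2 (A *ᵥ y)) i
          = hA.eigenvalues i * hA.eigenvectorBasis.repr (WithLp.toLp 2 y) i := coord_mulVec A hA y i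
      have h2 : hA.eigenvectorBasis.repr (WithLp.toLp 2 (A *ᵥ y)) i
          = μ * hA.eigenvectorBasis.repr (WithLp.toLp 2 y) i := by
        rw [show (WithLp.toLp 2 (A *ᵥ y))
            = μ • (WithLp.toLp 2 y) from hyv ▸ rfl, LinearIsometryEquiv.map_smul]
        rfl
      have := h1.symm.trans h2
      rcases mul_eq_mul_right_iff.1 this with h | h
      · exact absurd h (hno i)
      · exact h
    have : hA.eigenvectorBasis.repr (WithLp.toLp 2 y) = 0 := by
      ext i; exact hz i
    have : (WithLp.toLp 2 y) = 0 := by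
      have := congrArg hA.eigenvectorBasis.repr.symm this
      simpa using this
    exact hy.2 (by ext u; exact congrFun (congrArg WithLp.ofLp this) u)
  · rintro ⟨i, rfl⟩
    apply Module.End.hasEigenvalue_of_hasEigenvector (x := ⇑(hA.eigenvectorBasis i))
    constructor
    · rw [Module.End.mem_eigenspace_iff, Matrix.toLin'_apply]
      exact hA.mulVec_eigenvectorBasis i
    · exact funcoe_ne_zero _ (hA.eigenvectorBasis.orthonormal.ne_zero i)

lemma exists_max_eigen (A : Matrix V V ℝ) (hA : A.IsHermitian) [Nonempty V] :
    ∃ l : ℝ, l = sSup {μ : ℝ | Module.End.HasEigenvalue (Matrix.toLin' A) μ} ∧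
      (∃ i, hA.eigenvalues i = l) ∧ (∀ i, hA.eigenvalues i ≤ l) := by
  obtain ⟨i₀, -, hmax⟩ := Finset.exists_max_image Finset.univ hA.eigenvalues ⟨Classical.arbitrary V,
    Finset.mem_univ _⟩
  have hset : {μ : ℝ | Module.End.HasEigenvalue (Matrix.toLin' A) μ}
      = Set.range hA.eigenvalues := by
    ext μ
    simp only [Set.mem_setOf_eq, Set.mem_range]
    exact eigen_mem A hA μ
  refine ⟨hA.eigenvalues i₀, ?_, ⟨i₀, rfl⟩, fun i => hmax i (Finset.mem_univ i)⟩
  rw [hset]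
  apply le_antisymm
  · apply le_csSup
    · exact (Set.finite_range hA.eigenvalues).bddAbove
    · exact ⟨i₀, rfl⟩
  · refine csSup_le ⟨hA.eigenvalues i₀, ⟨i₀, rfl⟩⟩ ?_
    rintro μ ⟨i, rfl⟩
    exact hmax i (Finset.mem_univ i)

lemma perron (A : Matrix V V ℝ) (hA : A.IsHermitian) (hnn : ∀ u v, 0 ≤ A u v) [Nonempty V] :
    ∃ x : V → ℝ, (∀ v, 0 ≤ x v) ∧ x ≠ 0 ∧
      A *ᵥ x = (sSup {μ : ℝ | Module.End.HasEigenvalue (Matrix.toLin' A) μ}) • x := by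
  obtain ⟨l, hl, ⟨i₀, hi₀⟩, hub⟩ := exists_max_eigen A hA
  rw [← hl]
  obtain ⟨y, hy⟩ := ((eigen_mem A hA l).2 ⟨i₀, hi₀⟩).exists_hasEigenvector
  have hyv : A *ᵥ y = l • y := by
    simpa [Matrix.toLin'_apply] using hy.apply_eq_smul
  set x : V → ℝ := fun v => |y v| with hxdef
  have hxy : ∀ u, x u * x u = y u * y u := fun u => by
    simp [hxdef, abs_mul_abs_self]
  have hQy : ∑ u, y u * (A *ᵥ y) u = l * ∑ u, y u * y u := by
    rw [hyv]
    simp only [Pi.smul_apply, smul_eq_mul, Finset.mul_sum]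
    exact Finset.sum_congr rfl fun u _ => by ring
  have hgain : ∑ u, y u * (A *ᵥ y) u ≤ ∑ u, x u * (A *ᵥ x) u := by
    apply Finset.sum_le_sum
    intro u _
    simp only [Matrix.mulVec, dotProduct, Finset.mul_sum]
    apply Finset.sum_le_sum
    intro v _
    calc y u * (A u v * y v) ≤ |y u * (A u v * y v)| := le_abs_self _
      _ = x u * (A u v * x v) := by
          simp [hxdef, abs_mul, abs_of_nonneg (hnn u v)]
  have hup : ∑ u, x u * (A *ᵥ x) u
      ≤ l * ∑ u, x u * x u := by
    rw [parseval_mixed A hA x, parseval_sq A hA x, Finset.mul_sum]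
    apply Finset.sum_le_sum
    intro i _
    apply mul_le_mul_of_nonneg_right (hub i) (mul_self_nonneg _)
  have hsums : l * ∑ u, x u * x u = l * ∑ u, y u * y u := by
    congr 1; exact Finset.sum_congr rfl fun u _ => hxy u
  have hEq : ∑ u, x u * (A *ᵥ x) u = l * ∑ u, x u * x u := by
    apply le_antisymm hup
    rw [hsums, ← hQy]; exact hgain
  have hzero : ∀ i, hA.eigenvalues i ≠ l → hA.eigenvectorBasis.repr (WithLp.toLp 2 x) i = 0 := by
    have hsum0 : ∑ i, (l - hA.eigenvalues i) *
        (hA.eigenvectorBasis.repr (WithLp.toLp 2 x) i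
          * hA.eigenvectorBasis.repr (WithLp.toLp 2 x) i) = 0 := by
      have h := hEq
      rw [parseval_mixed A hA x, parseval_sq A hA x, Finset.mul_sum] at h
      have expand : ∑ i, (l - hA.eigenvalues i) *
          (hA.eigenvectorBasis.repr (WithLp.toLp 2 x) i
            * hA.eigenvectorBasis.repr (WithLp.toLp 2 x) i)
          = (∑ i, l * (hA.eigenvectorBasis.repr (WithLp.toLp 2 x) i
            * hA.eigenvectorBasis.repr (WithLp.toLp 2 x) i))
          - ∑ i, hA.eigenvalues i * (hA.eigenvectorBasis.repr (WithLp.toLp 2 x) i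
            * hA.eigenvectorBasis.repr (WithLp.toLp 2 x) i) := by
        rw [← Finset.sum_sub_distrib]
        exact Finset.sum_congr rfl fun i _ => by ring
      rw [expand, ← h, sub_self]
    intro i hi
    have hterm : ∀ j ∈ Finset.univ, 0 ≤ (l - hA.eigenvalues j) *
        (hA.eigenvectorBasis.repr (WithLp.toLp 2 x) j
          * hA.eigenvectorBasis.repr (WithLp.toLp 2 x) j) := fun j _ =>
      mul_nonneg (sub_nonneg.2 (hub j)) (mul_self_nonneg _)
    have := (Finset.sum_eq_zero_iff_of_nonneg hterm).1 hsum0 i (Finset.mem_univ i)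
    rcases mul_eq_zero.1 this with h | h
    · exact absurd (by linarith [sub_eq_zero.1 h]) hi
    · exact mul_self_eq_zero.1 h
  refine ⟨x, fun v => abs_nonneg _, ?_, eigen_reconstruct A hA x l hzero⟩
  intro hx0
  apply hy.2
  ext u
  have := congrFun hx0 u
  simp only [hxdef, Pi.zero_apply] at this ⊢
  exact abs_eq_zero.1 this

lemma eigen_le_sSup (A : Matrix V V ℝ) (hA : A.IsHermitian) (μ : ℝ) (y : V → ℝ)
    (hy0 : y ≠ 0) (hy : A *ᵥ y = μ • y) :
    μ ≤ sSup {μ : ℝ | Module.End.HasEigenvalue (Matrix.toLin' A) μ} := by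
  have hmem : Module.End.HasEigenvalue (Matrix.toLin' A) μ := by
    apply Module.End.hasEigenvalue_of_hasEigenvector (x := y)
    exact ⟨Module.End.mem_eigenspace_iff.2 (by rw [Matrix.toLin'_apply]; exact hy), hy0⟩
  apply le_csSup
  · have hset : {μ : ℝ | Module.End.HasEigenvalue (Matrix.toLin' A) μ}
        = Set.range hA.eigenvalues := by
      ext ν
      simp only [Set.mem_setOf_eq, Set.mem_range]
      exact eigen_mem A hA ν
    rw [hset]
    exact (Set.finite_range hA.eigenvalues).bddAbove
  · exact hmem

end Spectral


section CubeLemmas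
variable {α : Type*} [DecidableEq α]

lemma symmDiff_trans_eq (a b c : Finset α) : a ∆ c = (a ∆ b) ∆ (b ∆ c) := by
  rw [symmDiff_assoc, symmDiff_symmDiff_cancel_left]

lemma singleton_symmDiff_mem {z : α} {s : Finset α} (h : z ∈ s) : ({z} : Finset α) ∆ s = s.erase z := by
  ext a
  simp only [Finset.mem_symmDiff, Finset.mem_singleton, Finset.mem_erase]
  constructor
  · rintro (⟨rfl, hz⟩ | ⟨ha, hz⟩)
    · exact absurd h hz
    · exact ⟨fun e => hz (e ▸ rfl), ha⟩
  · rintro ⟨hne, ha⟩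
    exact Or.inr ⟨ha, fun e => hne e⟩

lemma singleton_symmDiff_not_mem {z : α} {s : Finset α} (h : z ∉ s) :
    ({z} : Finset α) ∆ s = insert z s := by
  ext a
  simp only [Finset.mem_symmDiff, Finset.mem_singleton, Finset.mem_insert]
  constructor
  · rintro (⟨rfl, _⟩ | ⟨ha, _⟩)
    · exact Or.inl rfl
    · exact Or.inr ha
  · rintro (rfl | ha)
    · exact Or.inl ⟨rfl, h⟩
    · exact Or.inr ⟨ha, fun e => h (e ▸ ha)⟩

/-- step: two steps of distance one land at distance 0 or 2. -/
lemma step_dichotomy (a b c : Finset α) (hab : (a ∆ b).card = 1) (hbc : (b ∆ c).card = 1) :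
    a = c ∨ (a ∆ c).card = 2 := by
  obtain ⟨z, hz⟩ := Finset.card_eq_one.1 hab
  obtain ⟨y, hy⟩ := Finset.card_eq_one.1 hbc
  have h := symmDiff_trans_eq a b c
  rw [hz, hy] at h
  by_cases hzy : z = y
  · left
    subst hzy
    rw [symmDiff_self] at h
    exact Finset.symmDiff_eq_empty.1 (by simpa using h)
  · right
    rw [singleton_symmDiff_not_mem (by simpa using hzy)] at h
    rw [h]
    rw [Finset.card_insert_of_notMem (by simpa using hzy)]
    simp

/-- from distance 2, one step lands at distance 1 or 3. -/
lemma dist2_step (p w q : Finset α) (hp : (p ∆ w).card = 2) (hq : (q ∆ p).card = 1) :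
    (q ∆ w).card = 1 ∨ (q ∆ w).card = 3 := by
  obtain ⟨z, hz⟩ := Finset.card_eq_one.1 hq
  have h := symmDiff_trans_eq q p w
  rw [hz] at h
  by_cases hmem : z ∈ p ∆ w
  · left
    rw [h, singleton_symmDiff_mem hmem, Finset.card_erase_of_mem hmem, hp]
  · right
    rw [h, singleton_symmDiff_not_mem hmem, Finset.card_insert_of_notMem hmem, hp]

lemma subset_of_dist2 (p w u : Finset α) (hpw : (p ∆ w).card = 2)
    (hu1 : (u ∆ w).card = 1) (hu2 : (u ∆ p).card = 1) : u ∆ w ⊆ p ∆ w := by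
  obtain ⟨s, hs⟩ := Finset.card_eq_one.1 hu1
  obtain ⟨t, ht⟩ := Finset.card_eq_one.1 hu2
  have h := symmDiff_trans_eq p u w
  have hpu : (p ∆ u) = {t} := by rw [symmDiff_comm]; exact ht
  rw [hpu, hs] at h
  rw [hs]
  by_cases hst : t = s
  · subst hst
    rw [symmDiff_self] at h
    rw [h] at hpw
    simp at hpw
  · rw [singleton_symmDiff_not_mem (by simpa using hst)] at h
    rw [h]
    intro a ha
    simp only [Finset.mem_singleton] at ha
    subst ha
    simp

lemma subset_of_dist3 (q w p : Finset α) (hq3 : (q ∆ w).card = 3) (hp2 : (p ∆ w).card = 2)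
    (hadj : (p ∆ q).card = 1) : p ∆ q ⊆ q ∆ w := by
  obtain ⟨z, hz⟩ := Finset.card_eq_one.1 hadj
  have h := symmDiff_trans_eq q p w
  have hqp : (q ∆ p) = {z} := by rw [symmDiff_comm]; exact hz
  rw [hqp] at h
  rw [hz]
  by_cases hmem : z ∈ p ∆ w
  · exfalso
    rw [h, singleton_symmDiff_mem hmem, Finset.card_erase_of_mem hmem, hp2] at hq3
    simp at hq3
  · rw [h, singleton_symmDiff_not_mem hmem]
    intro a ha
    simp only [Finset.mem_singleton] at ha
    subst ha
    exact Finset.mem_insert_self _ _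

/-- generic counting lemma: if each element of `F` maps (via `g · ∆ t`) to a singleton
subset of `s`, then `F.card ≤ s.card`. -/
lemma card_le_of_singleton_subsets {ι : Type*} (g : ι → Finset α) (hg : Function.Injective g)
    (F : Finset ι) (t s : Finset α)
    (h : ∀ u ∈ F, (g u ∆ t).card = 1 ∧ g u ∆ t ⊆ s) : F.card ≤ s.card := by
  have hle := Finset.card_le_card_of_injOn (f := fun u => g u ∆ t) (t := s.powersetCard 1)
    (fun u hu => Finset.mem_powersetCard.2 ⟨(h u hu).2, (h u hu).1⟩)
    (fun u hu v hv heq => by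
      apply hg
      have h2 := congrArg (· ∆ t) heq
      simpa [symmDiff_symmDiff_cancel_right] using h2)
  simpa [Finset.card_powersetCard, Nat.choose_one_right] using hle

end CubeLemmas

section Core
variable {α : Type*} [DecidableEq α] {W : Type*} [Fintype W] [DecidableEq W]

lemma triangle_free (G : SimpleGraph W) (f : W → Finset α) (hf : Function.Injective f)
    (hadj : ∀ a b, G.Adj a b ↔ (f a ∆ f b).card = 1)
    (a b c : W) (hab : G.Adj a b) (hbc : G.Adj b c) : ¬ G.Adj a c := by
  intro hac
  rw [hadj] at hab hbc hac
  rcases step_dichotomy _ _ _ hab hbc with h | h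
  · rw [hf h, symmDiff_self] at hac
    simp at hac
  · rw [hac] at h
    norm_num at h

lemma core (G : SimpleGraph W) [DecidableRel G.Adj] (f : W → Finset α)
    (hf : Function.Injective f) (hadj : ∀ a b, G.Adj a b ↔ (f a ∆ f b).card = 1)
    (n : ℕ) (hcardV : Fintype.card W = n) (hn : 103 ≤ n)
    (l : ℝ) (x : W → ℝ) (hl0 : 0 ≤ l) (hl2 : ((n : ℝ) - 1) ≤ l ^ 2)
    (w : W) (hw1 : x w = 1) (hwle : ∀ v, x v ≤ 1) (hx0 : ∀ v, 0 ≤ x v)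
    (heig : ∀ v, ∑ u ∈ G.neighborFinset v, x u = l * x v) :
    (∀ v, v ≠ w → G.Adj w v) ∧ l ^ 2 ≤ (n : ℝ) - 1 := by
  classical
  set D : ℕ → Finset W :=
    fun j => Finset.univ.filter (fun v => (f v ∆ f w).card = j) with hD
  have hmemD : ∀ j (v : W), v ∈ D j ↔ (f v ∆ f w).card = j := by
    intro j v
    simp [hD]
  have hDne : ∀ j, j ≠ 0 → ∀ v ∈ D j, v ≠ w := by
    intro j hj v hv hvw
    rw [hmemD] at hv
    rw [hvw, symmDiff_self] at hv
    simp at hv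
    exact hj hv.symm
  have hNw : G.neighborFinset w = D 1 := by
    ext v
    rw [SimpleGraph.mem_neighborFinset, hmemD, hadj, symmDiff_comm]
  have hn' : (103 : ℝ) ≤ (n : ℝ) := by exact_mod_cast hn
  have hl10 : 10 ≤ l := by nlinarith
  -- the eigen equation at w
  have hl_eq : l = ∑ u ∈ D 1, x u := by
    have h := heig w
    rw [hNw, hw1, mul_one] at h
    exact h.symm
  set c2 : W → ℕ := fun p => ((D 1).filter (fun u => G.Adj u p)).card with hc2
  set e3 : W → ℕ := fun p => ((D 3).filter (fun q => G.Adj p q)).card with he3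
  -- first expansion: l² = |D1| + ∑_{p ∈ D2} c2 p * x p
  have e0 : ∀ u ∈ D 1, ∑ q ∈ G.neighborFinset u, x q
      = 1 + ∑ q ∈ (D 2).filter (fun q => G.Adj u q), x q := by
    intro u hu
    have hu1 : (f u ∆ f w).card = 1 := (hmemD 1 u).1 hu
    have hw_mem : w ∈ G.neighborFinset u := by
      rw [SimpleGraph.mem_neighborFinset]
      exact (hadj u w).2 hu1
    have herase : (G.neighborFinset u).erase w = (D 2).filter (fun q => G.Adj u q) := by
      ext q
      simp only [Finset.mem_erase, SimpleGraph.mem_neighborFinset, Finset.mem_filter, hmemD,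
        Finset.mem_univ, true_and]
      constructor
      · rintro ⟨hqw, huq⟩
        refine ⟨?_, huq⟩
        have hq1 : (f q ∆ f u).card = 1 := by
          rw [symmDiff_comm]
          exact (hadj u q).1 huq
        rcases step_dichotomy (f q) (f u) (f w) hq1 hu1 with h | h
        · exact absurd (hf h) hqw
        · exact h
      · rintro ⟨h2, huq⟩
        refine ⟨?_, huq⟩
        intro hqw
        rw [hqw, symmDiff_self] at h2
        simp at h2
    rw [← Finset.add_sum_erase _ x hw_mem, hw1, herase]
  have swap1 : ∑ u ∈ D 1, ∑ q ∈ (D 2).filter (fun q => G.Adj u q), x q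
      = ∑ q ∈ D 2, (c2 q : ℝ) * x q := by
    have h1 : ∀ u ∈ D 1, ∑ q ∈ (D 2).filter (fun q => G.Adj u q), x q
        = ∑ q ∈ D 2, if G.Adj u q then x q else 0 := fun u _ => Finset.sum_filter _ _
    rw [Finset.sum_congr rfl h1, Finset.sum_comm]
    apply Finset.sum_congr rfl
    intro q hq
    rw [← Finset.sum_filter, Finset.sum_const, nsmul_eq_mul]
  have hll : l * l = ((D 1).card : ℝ) + ∑ p ∈ D 2, (c2 p : ℝ) * x p := by
    calc l * l = ∑ u ∈ D 1, l * x u := by rw [← Finset.mul_sum, ← hl_eq]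
      _ = ∑ u ∈ D 1, ∑ q ∈ G.neighborFinset u, x q := by
          exact Finset.sum_congr rfl fun u _ => (heig u).symm
      _ = ∑ u ∈ D 1, (1 + ∑ q ∈ (D 2).filter (fun q => G.Adj u q), x q) :=
          Finset.sum_congr rfl e0
      _ = ((D 1).card : ℝ) + ∑ u ∈ D 1, ∑ q ∈ (D 2).filter (fun q => G.Adj u q), x q := by
          rw [Finset.sum_add_distrib, Finset.sum_const, nsmul_eq_mul, mul_one]
      _ = ((D 1).card : ℝ) + ∑ p ∈ D 2, (c2 p : ℝ) * x p := by rw [swap1]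
  -- second expansion bound: for p ∈ D2, l * x p ≤ c2 p + e3 p
  have st2 : ∀ p ∈ D 2, l * x p ≤ (c2 p : ℝ) + (e3 p : ℝ) := by
    intro p hp
    have hp2 : (f p ∆ f w).card = 2 := (hmemD 2 p).1 hp
    rw [← heig p]
    have hsplit := Finset.sum_filter_add_sum_filter_not (G.neighborFinset p)
      (fun q => (f q ∆ f w).card = 1) x
    rw [← hsplit]
    have hpart1 : (G.neighborFinset p).filter (fun q => (f q ∆ f w).card = 1)
        = (D 1).filter (fun u => G.Adj u p) := by
      ext q
      simp only [Finset.mem_filter, SimpleGraph.mem_neighborFinset, hmemD, Finset.mem_univ,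
        true_and]
      rw [G.adj_comm]
      tauto
    have hpart2 : (G.neighborFinset p).filter (fun q => ¬ (f q ∆ f w).card = 1)
        = (D 3).filter (fun q => G.Adj p q) := by
      ext q
      simp only [Finset.mem_filter, SimpleGraph.mem_neighborFinset, hmemD, Finset.mem_univ,
        true_and]
      constructor
      · rintro ⟨hpq, hnot1⟩
        refine ⟨?_, hpq⟩
        have hq1 : (f q ∆ f p).card = 1 := by
          rw [symmDiff_comm]
          exact (hadj p q).1 hpq
        rcases dist2_step (f p) (f w) (f q) hp2 hq1 with h | h
        · exact absurd h hnot1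
        · exact h
      · rintro ⟨h3, hpq⟩
        exact ⟨hpq, by rw [h3]; norm_num⟩
    have hb1 : ∑ q ∈ (G.neighborFinset p).filter (fun q => (f q ∆ f w).card = 1), x q
        ≤ (c2 p : ℝ) := by
      rw [hpart1, hc2]
      calc ∑ q ∈ (D 1).filter (fun u => G.Adj u p), x q
          ≤ ∑ q ∈ (D 1).filter (fun u => G.Adj u p), 1 :=
            Finset.sum_le_sum fun q _ => hwle q
        _ = _ := by rw [Finset.sum_const, nsmul_eq_mul, mul_one]
    have hb2 : ∑ q ∈ (G.neighborFinset p).filter (fun q => ¬ (f q ∆ f w).card = 1), x q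
        ≤ (e3 p : ℝ) := by
      rw [hpart2, he3]
      calc ∑ q ∈ (D 3).filter (fun q => G.Adj p q), x q
          ≤ ∑ q ∈ (D 3).filter (fun q => G.Adj p q), 1 :=
            Finset.sum_le_sum fun q _ => hwle q
        _ = _ := by rw [Finset.sum_const, nsmul_eq_mul, mul_one]
    linarith
  -- c2 p ≤ 2 for p ∈ D2
  have st3 : ∀ p ∈ D 2, c2 p ≤ 2 := by
    intro p hp
    have hp2 : (f p ∆ f w).card = 2 := (hmemD 2 p).1 hp
    have := card_le_of_singleton_subsets f hf ((D 1).filter (fun u => G.Adj u p)) (f w)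
      (f p ∆ f w) ?_
    · rw [hc2]; rw [hp2] at this; exact this
    intro u hu
    rw [Finset.mem_filter] at hu
    have hu1 : (f u ∆ f w).card = 1 := (hmemD 1 u).1 hu.1
    have hu2 : (f u ∆ f p).card = 1 := (hadj u p).1 hu.2
    exact ⟨hu1, subset_of_dist2 (f p) (f w) (f u) hp2 hu1 hu2⟩
  -- ∑_{p∈D2} e3 p ≤ 3 |D3|
  have st4 : ∑ p ∈ D 2, e3 p ≤ 3 * (D 3).card := by
    have hswap : ∑ p ∈ D 2, e3 p = ∑ q ∈ D 3, ((D 2).filter (fun p => G.Adj p q)).card := by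
      simp only [he3, Finset.card_filter]
      rw [Finset.sum_comm]
    rw [hswap]
    have hbound : ∀ q ∈ D 3, ((D 2).filter (fun p => G.Adj p q)).card ≤ 3 := by
      intro q hq
      have hq3 : (f q ∆ f w).card = 3 := (hmemD 3 q).1 hq
      have := card_le_of_singleton_subsets f hf ((D 2).filter (fun p => G.Adj p q)) (f q)
        (f q ∆ f w) ?_
      · rw [hq3] at this; exact this
      intro p hp
      rw [Finset.mem_filter] at hp
      have hp2 : (f p ∆ f w).card = 2 := (hmemD 2 p).1 hp.1
      have hpq : (f p ∆ f q).card = 1 := (hadj p q).1 hp.2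
      exact ⟨hpq, subset_of_dist3 (f q) (f w) (f p) hq3 hp2 hpq⟩
    calc ∑ q ∈ D 3, ((D 2).filter (fun p => G.Adj p q)).card ≤ ∑ q ∈ D 3, 3 :=
        Finset.sum_le_sum hbound
      _ = 3 * (D 3).card := by rw [Finset.sum_const, smul_eq_mul, mul_comm]
  -- counting: |D1| + |D2| + |D3| ≤ n - 1
  have hdisj12 : Disjoint (D 1) (D 2) := by
    rw [Finset.disjoint_left]
    intro v h1 h2
    rw [hmemD] at h1 h2
    omega
  have hdisj3 : Disjoint (D 1 ∪ D 2) (D 3) := by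
    rw [Finset.disjoint_left]
    intro v h1 h3
    rw [Finset.mem_union, hmemD, hmemD] at h1
    rw [hmemD] at h3
    omega
  have hsub : D 1 ∪ D 2 ∪ D 3 ⊆ Finset.univ.erase w := by
    intro v hv
    rw [Finset.mem_union, Finset.mem_union] at hv
    rw [Finset.mem_erase]
    refine ⟨?_, Finset.mem_univ v⟩
    rcases hv with (h | h) | h
    · exact hDne 1 one_ne_zero v h
    · exact hDne 2 two_ne_zero v h
    · exact hDne 3 three_ne_zero v h
  have hcount : (D 1).card + (D 2).card + (D 3).card ≤ n - 1 := by
    have h1 := Finset.card_le_card hsub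
    rw [Finset.card_erase_of_mem (Finset.mem_univ w), Finset.card_univ, hcardV] at h1
    rw [Finset.card_union_of_disjoint hdisj3, Finset.card_union_of_disjoint hdisj12] at h1
    exact h1
  have hn1 : 1 ≤ n := by omega
  have hcountR : ((D 1).card : ℝ) + ((D 2).card : ℝ) + ((D 3).card : ℝ) ≤ (n : ℝ) - 1 := by
    have := hcount
    have h2 : ((D 1).card + (D 2).card + (D 3).card : ℕ) ≤ (n - 1 : ℕ) := this
    calc ((D 1).card : ℝ) + ((D 2).card : ℝ) + ((D 3).card : ℝ)
        = (((D 1).card + (D 2).card + (D 3).card : ℕ) : ℝ) := by push_cast; ring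
      _ ≤ ((n - 1 : ℕ) : ℝ) := by exact_mod_cast h2
      _ = (n : ℝ) - 1 := by rw [Nat.cast_sub hn1]; norm_num
  -- the main cubic inequality
  have hstep : l ^ 3 ≤ ((D 1).card : ℝ) * l + 4 * ((D 2).card : ℝ) + 6 * ((D 3).card : ℝ) := by
    have h1 : l ^ 3 = ((D 1).card : ℝ) * l + ∑ p ∈ D 2, (c2 p : ℝ) * (l * x p) := by
      calc l ^ 3 = l * (l * l) := by ring
        _ = l * (((D 1).card : ℝ) + ∑ p ∈ D 2, (c2 p : ℝ) * x p) := by rw [hll]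
        _ = ((D 1).card : ℝ) * l + ∑ p ∈ D 2, (c2 p : ℝ) * (l * x p) := by
            rw [mul_add, Finset.mul_sum]
            congr 1
            · ring
            · exact Finset.sum_congr rfl fun p _ => by ring
    have h2 : ∑ p ∈ D 2, (c2 p : ℝ) * (l * x p)
        ≤ ∑ p ∈ D 2, (2 * ((c2 p : ℝ) + (e3 p : ℝ))) := by
      apply Finset.sum_le_sum
      intro p hp
      have ha := st2 p hp
      have hb := st3 p hp
      have hc2nn : (0:ℝ) ≤ (c2 p : ℝ) := Nat.cast_nonneg _
      have hce : (0:ℝ) ≤ (c2 p : ℝ) + (e3 p : ℝ) := by positivity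
      calc (c2 p : ℝ) * (l * x p) ≤ (c2 p : ℝ) * ((c2 p : ℝ) + (e3 p : ℝ)) :=
          mul_le_mul_of_nonneg_left ha hc2nn
        _ ≤ 2 * ((c2 p : ℝ) + (e3 p : ℝ)) := by
            apply mul_le_mul_of_nonneg_right _ hce
            exact_mod_cast hb
    have h3 : ∑ p ∈ D 2, (2 * ((c2 p : ℝ) + (e3 p : ℝ)))
        ≤ 4 * ((D 2).card : ℝ) + 6 * ((D 3).card : ℝ) := by
      have hc2sum : ∑ p ∈ D 2, (c2 p : ℝ) ≤ 2 * ((D 2).card : ℝ) := by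
        calc ∑ p ∈ D 2, (c2 p : ℝ) ≤ ∑ p ∈ D 2, (2 : ℝ) :=
            Finset.sum_le_sum fun p hp => by exact_mod_cast st3 p hp
          _ = 2 * ((D 2).card : ℝ) := by rw [Finset.sum_const, nsmul_eq_mul]; ring
      have he3sum : ∑ p ∈ D 2, (e3 p : ℝ) ≤ 3 * ((D 3).card : ℝ) := by
        have := st4
        calc ∑ p ∈ D 2, (e3 p : ℝ) = ((∑ p ∈ D 2, e3 p : ℕ) : ℝ) := by push_cast; ring
          _ ≤ ((3 * (D 3).card : ℕ) : ℝ) := by exact_mod_cast this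
          _ = 3 * ((D 3).card : ℝ) := by push_cast; ring
      calc ∑ p ∈ D 2, (2 * ((c2 p : ℝ) + (e3 p : ℝ)))
          = 2 * (∑ p ∈ D 2, (c2 p : ℝ)) + 2 * (∑ p ∈ D 2, (e3 p : ℝ)) := by
            simp [mul_add, Finset.sum_add_distrib, Finset.mul_sum]
        _ ≤ 2 * (2 * ((D 2).card : ℝ)) + 2 * (3 * ((D 3).card : ℝ)) := by
            apply add_le_add
            · linarith
            · linarith
        _ = 4 * ((D 2).card : ℝ) + 6 * ((D 3).card : ℝ) := by ring
    linarith
  -- case analysis on |D1|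
  have hkle : (D 1).card ≤ n - 1 := by omega
  by_cases hkk : (D 1).card = n - 1
  · constructor
    · -- D 1 = univ.erase w, so w is adjacent to everything
      have hD1sub : D 1 ⊆ Finset.univ.erase w := fun v hv =>
        hsub (Finset.mem_union_left _ (Finset.mem_union_left _ hv))
      have hD1eq : D 1 = Finset.univ.erase w := by
        apply Finset.eq_of_subset_of_card_le hD1sub
        rw [Finset.card_erase_of_mem (Finset.mem_univ w), Finset.card_univ, hcardV, hkk]
      intro v hv
      have : v ∈ D 1 := by
        rw [hD1eq, Finset.mem_erase]
        exact ⟨hv, Finset.mem_univ v⟩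
      rw [hadj, symmDiff_comm]
      exact (hmemD 1 v).1 this
    · -- D2 and D3 are empty, so l³ ≤ (n-1) l
      have hD23 : (D 2).card = 0 ∧ (D 3).card = 0 := by omega
      have hstep2 : l ^ 3 ≤ ((n : ℝ) - 1) * l := by
        have hkR : ((D 1).card : ℝ) = (n : ℝ) - 1 := by
          rw [hkk, Nat.cast_sub hn1]; norm_num
        rw [hkR, hD23.1, hD23.2] at hstep
        simpa using hstep
      nlinarith
  · -- |D1| ≤ n - 2 : contradiction with l² ≥ n - 1
    exfalso
    have hk2 : (D 1).card ≤ n - 2 := by omega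
    have hk2R : ((D 1).card : ℝ) ≤ (n : ℝ) - 2 := by
      calc ((D 1).card : ℝ) ≤ ((n - 2 : ℕ) : ℝ) := by exact_mod_cast hk2
        _ ≤ (n : ℝ) - 2 := by
          rw [Nat.cast_sub (by omega)]; norm_num
    have hl4 : ((n : ℝ) - 1) * l ≤ l ^ 3 := by nlinarith
    have h3 : ((D 1).card : ℝ) * (l - 6) ≤ ((n : ℝ) - 2) * (l - 6) :=
      mul_le_mul_of_nonneg_right hk2R (by linarith)
    have ha0 : (0:ℝ) ≤ ((D 2).card : ℝ) := Nat.cast_nonneg _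
    have hb0 : (0:ℝ) ≤ ((D 3).card : ℝ) := Nat.cast_nonneg _
    nlinarith [hstep, hcountR, h3, hl4, hl10]

end Core

theorem star_is_best (d n : ℕ) (U : Finset (Finset (Fin d)))
    (hcard : U.card = n) (hnd : n ≤ d) (hn : 103 ≤ n) :
    lam1 ((cube d).induce (↑U : Set (Finset (Fin d)))) ≤ Real.sqrt ((n : ℝ) - 1) ∧
    (lam1 ((cube d).induce (↑U : Set (Finset (Fin d)))) = Real.sqrt ((n : ℝ) - 1) ↔
      ∃ c : ↥(↑U : Set (Finset (Fin d))), ∀ a b : ↥(↑U : Set (Finset (Fin d))),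
        ((cube d).induce (↑U : Set (Finset (Fin d)))).Adj a b ↔
          ((a = c ∧ b ≠ c) ∨ (b = c ∧ a ≠ c))) := by
  classical
  set G := (cube d).induce (↑U : Set (Finset (Fin d))) with hGdef
  have hcardV : Fintype.card ↥(↑U : Set (Finset (Fin d))) = n := by
    rw [← hcard]
    exact Fintype.card_coe U
  haveI : Nonempty ↥(↑U : Set (Finset (Fin d))) := by
    apply Fintype.card_pos_iff.1
    omega
  set A := G.adjMatrix ℝ with hAdef
  have hA : A.IsHermitian := by
    ext i j
    simp [hAdef, Matrix.conjTranspose_apply, SimpleGraph.adjMatrix_apply, SimpleGraph.adj_comm]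
  have hnn : ∀ u v, 0 ≤ A u v := by
    intro u v
    simp only [hAdef, SimpleGraph.adjMatrix_apply]
    split <;> norm_num
  have hGadj : ∀ a b : ↥(↑U : Set (Finset (Fin d))), G.Adj a b
      ↔ ((a : Finset (Fin d)) ∆ (b : Finset (Fin d))).card = 1 := fun a b => Iff.rfl
  set l := lam1 G with hldef
  have hlam : l = sSup {μ : ℝ | Module.End.HasEigenvalue (Matrix.toLin' A) μ} := rfl
  have hn1R : (0:ℝ) ≤ (n:ℝ) - 1 := by
    have : (103:ℝ) ≤ (n:ℝ) := by exact_mod_cast hn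
    linarith
  -- Perron eigenvector, normalized
  obtain ⟨x₀, hx₀0, hx₀ne, hx₀eig⟩ := perron A hA hnn
  rw [← hlam] at hx₀eig
  obtain ⟨w, -, hmax⟩ := Finset.exists_max_image Finset.univ x₀
    ⟨Classical.arbitrary _, Finset.mem_univ _⟩
  have hmax' : ∀ v, x₀ v ≤ x₀ w := fun v => hmax v (Finset.mem_univ v)
  have hwpos : 0 < x₀ w := by
    obtain ⟨v, hv⟩ := Function.ne_iff.1 hx₀ne
    have : 0 < x₀ v := lt_of_le_of_ne (hx₀0 v) (Ne.symm hv)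
    exact lt_of_lt_of_le this (hmax' v)
  have hx₀sum : ∀ v, ∑ u ∈ G.neighborFinset v, x₀ u = l * x₀ v := by
    intro v
    have h := congrFun hx₀eig v
    rw [SimpleGraph.adjMatrix_mulVec_apply] at h
    simpa using h
  set x : ↥(↑U : Set (Finset (Fin d))) → ℝ := fun v => x₀ v * (x₀ w)⁻¹ with hxdef
  have hw1 : x w = 1 := mul_inv_cancel₀ (ne_of_gt hwpos)
  have hwle : ∀ v, x v ≤ 1 := by
    intro v
    rw [hxdef]
    rw [← hw1]
    exact mul_le_mul_of_nonneg_right (hmax' v) (by positivity)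
  have hx0 : ∀ v, 0 ≤ x v := fun v => by
    rw [hxdef]
    exact mul_nonneg (hx₀0 v) (inv_nonneg.2 (le_of_lt hwpos))
  have heig : ∀ v, ∑ u ∈ G.neighborFinset v, x u = l * x v := by
    intro v
    rw [hxdef]
    simp only []
    rw [← Finset.sum_mul, hx₀sum v]
    ring
  have hl0 : 0 ≤ l := by
    have h := hx₀sum w
    have hge : 0 ≤ ∑ u ∈ G.neighborFinset w, x₀ u :=
      Finset.sum_nonneg fun u _ => hx₀0 u
    nlinarith
  -- main inequality
  have main_le : l ≤ Real.sqrt ((n : ℝ) - 1) := by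
    by_contra hcon
    push_neg at hcon
    have hsq : ((n : ℝ) - 1) ≤ l ^ 2 := by
      have h1 := Real.sq_sqrt hn1R
      have h2 := Real.sqrt_nonneg ((n : ℝ) - 1)
      nlinarith
    obtain ⟨-, hle⟩ := core G Subtype.val Subtype.coe_injective hGadj n hcardV hn l x hl0 hsq
      w hw1 hwle hx0 heig
    have h1 := Real.sq_sqrt hn1R
    have h2 := Real.sqrt_nonneg ((n : ℝ) - 1)
    nlinarith
  refine ⟨main_le, ?_, ?_⟩
  · -- equality implies star
    intro heq
    have hsq : ((n : ℝ) - 1) ≤ l ^ 2 := by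
      rw [heq, Real.sq_sqrt hn1R]
    obtain ⟨hstar, -⟩ := core G Subtype.val Subtype.coe_injective hGadj n hcardV hn l x hl0 hsq
      w hw1 hwle hx0 heig
    refine ⟨w, fun a b => ?_⟩
    constructor
    · intro hab
      have hne : a ≠ b := G.ne_of_adj hab
      by_cases ha : a = w
      · exact Or.inl ⟨ha, fun hb => hne (by rw [ha, hb])⟩
      · by_cases hb : b = w
        · exact Or.inr ⟨hb, ha⟩
        · exfalso
          exact triangle_free G Subtype.val Subtype.coe_injective hGadj a w b
            (G.adj_symm (hstar a ha)) (hstar b hb) hab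
    · rintro (⟨rfl, hb⟩ | ⟨rfl, ha⟩)
      · exact hstar b hb
      · exact G.adj_symm (hstar a ha)
  · -- star implies equality
    rintro ⟨c, hc⟩
    apply le_antisymm main_le
    set y : ↥(↑U : Set (Finset (Fin d))) → ℝ :=
      fun v => if v = c then Real.sqrt ((n : ℝ) - 1) else 1 with hydef
    have hcardR : ((Finset.univ.erase c).card : ℝ) = (n : ℝ) - 1 := by
      rw [Finset.card_erase_of_mem (Finset.mem_univ c), Finset.card_univ, hcardV,
        Nat.cast_sub (by omega)]
      norm_num
    have hyeig : A *ᵥ y = Real.sqrt ((n : ℝ) - 1) • y := by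
      ext v
      rw [SimpleGraph.adjMatrix_mulVec_apply]
      by_cases hv : v = c
      · subst hv
        have hNc : G.neighborFinset v = Finset.univ.erase v := by
          ext u
          rw [SimpleGraph.mem_neighborFinset, hc, Finset.mem_erase]
          constructor
          · rintro (⟨-, hu⟩ | ⟨-, hvv⟩)
            · exact ⟨hu, Finset.mem_univ u⟩
            · exact absurd rfl hvv
          · rintro ⟨hu, -⟩
            exact Or.inl ⟨rfl, hu⟩
        rw [hNc]
        have hsum : ∑ u ∈ Finset.univ.erase v, y u = ((Finset.univ.erase v).card : ℝ) := by
          rw [Finset.sum_congr rfl (fun u hu => ?_), Finset.sum_const, nsmul_eq_mul, mul_one]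
          rw [hydef]
          simp only [if_neg (Finset.mem_erase.1 hu).1]
        rw [hsum, hcardR]
        have : y v = Real.sqrt ((n : ℝ) - 1) := by rw [hydef]; simp
        rw [Pi.smul_apply, this, smul_eq_mul, Real.mul_self_sqrt hn1R]
      · have hNv : G.neighborFinset v = {c} := by
          ext u
          rw [SimpleGraph.mem_neighborFinset, hc, Finset.mem_singleton]
          constructor
          · rintro (⟨rfl, -⟩ | ⟨rfl, -⟩)
            · exact absurd rfl hv
            · rfl
          · rintro rfl
            exact Or.inr ⟨rfl, hv⟩
        rw [hNv, Finset.sum_singleton]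
        have h1 : y c = Real.sqrt ((n : ℝ) - 1) := by rw [hydef]; simp
        have h2 : y v = 1 := by rw [hydef]; simp [hv]
        rw [h1, Pi.smul_apply, h2, smul_eq_mul, mul_one]
    have hy0 : y ≠ 0 := by
      obtain ⟨v, hv⟩ := Fintype.exists_ne_of_one_lt_card (by omega) c
      intro h0
      have := congrFun h0 v
      rw [hydef] at this
      simp only [if_neg hv, Pi.zero_apply] at this
      exact one_ne_zero this
    exact eigen_le_sSup A hA _ y hy0 hyeig
end

section
/- Let G be a subgraph of the hypercube whose vertex set consists of subsets of [d] each of size at most t, where t ≤ d/2, and suppose the maximum degree of G is at most d. Then λ₁(G) ≤ 2√(t·d). -/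
open SimpleGraph Finset Matrix

lemma eig_le_of_row_sum {V : Type*} [Fintype V] [DecidableEq V]
    (M : Matrix V V ℝ) (hM : ∀ i j, 0 ≤ M i j)
    (w : V → ℝ) (hw : ∀ v, 0 < w v) {C : ℝ}
    (hrow : ∀ v, ∑ u, M v u * w u ≤ C * w v)
    {μ : ℝ} (hμ : Module.End.HasEigenvalue (Matrix.toLin' M) μ) : μ ≤ C := by
  obtain ⟨f, hf⟩ := hμ.exists_hasEigenvector
  have hfne : f ≠ 0 := hf.right
  have hEq : ∀ v, ∑ u, M v u * f u = μ * f v := by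
    intro v
    have h := hf.apply_eq_smul
    have h2 := congrFun h v
    simpa [Matrix.toLin'_apply, Matrix.mulVec, dotProduct] using h2
  obtain ⟨v₁, hv₁⟩ : ∃ v, f v ≠ 0 := Function.ne_iff.mp hfne
  obtain ⟨v₀, -, hmax⟩ := Finset.exists_max_image Finset.univ
    (fun v => |f v| / w v) ⟨v₁, Finset.mem_univ v₁⟩
  have hg0 : 0 < |f v₀| / w v₀ :=
    lt_of_lt_of_le (div_pos (abs_pos.mpr hv₁) (hw v₁)) (hmax v₁ (Finset.mem_univ v₁))
  have hfv₀ : 0 < |f v₀| := by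
    by_contra h
    push_neg at h
    have : |f v₀| = 0 := le_antisymm h (abs_nonneg _)
    rw [this, zero_div] at hg0
    exact lt_irrefl 0 hg0
  have hbound : ∀ u, |f u| ≤ (|f v₀| / w v₀) * w u := by
    intro u
    have h1 : |f u| / w u ≤ |f v₀| / w v₀ := hmax u (Finset.mem_univ u)
    calc |f u| = (|f u| / w u) * w u := by rw [div_mul_cancel₀ _ (hw u).ne']
    _ ≤ (|f v₀| / w v₀) * w u := by
        exact mul_le_mul_of_nonneg_right h1 (hw u).le
  have key : |μ| * |f v₀| ≤ C * |f v₀| := by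
    calc |μ| * |f v₀| = |μ * f v₀| := (abs_mul μ (f v₀)).symm
    _ = |∑ u, M v₀ u * f u| := by rw [hEq]
    _ ≤ ∑ u, |M v₀ u * f u| := Finset.abs_sum_le_sum_abs _ _
    _ = ∑ u, M v₀ u * |f u| := by
        refine Finset.sum_congr rfl fun u _ => ?_
        rw [abs_mul, abs_of_nonneg (hM v₀ u)]
    _ ≤ ∑ u, M v₀ u * ((|f v₀| / w v₀) * w u) := by
        refine Finset.sum_le_sum fun u _ => ?_
        exact mul_le_mul_of_nonneg_left (hbound u) (hM v₀ u)
    _ = (|f v₀| / w v₀) * ∑ u, M v₀ u * w u := by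
        rw [Finset.mul_sum]; refine Finset.sum_congr rfl fun u _ => by ring
    _ ≤ (|f v₀| / w v₀) * (C * w v₀) := by
        exact mul_le_mul_of_nonneg_left (hrow v₀) hg0.le
    _ = C * |f v₀| := by field_simp [(hw v₀).ne']
  have : |μ| ≤ C := le_of_mul_le_mul_right key hfv₀
  exact (le_abs_self μ).trans this


lemma symmDiff_card_one {α : Type*} [DecidableEq α] {S T : Finset α}
    (h : (symmDiff S T).card = 1) : T.card + 1 = S.card ∨ S.card + 1 = T.card := by
  have hST : symmDiff S T = (S \ T) ∪ (T \ S) := by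
    ext a; simp [symmDiff_def, Finset.mem_union, Finset.mem_sdiff]
  have hdisj : Disjoint (S \ T) (T \ S) := Finset.sdiff_disjoint.mono_right Finset.sdiff_subset
  have hcard : (S \ T).card + (T \ S).card = 1 := by
    rw [← Finset.card_union_of_disjoint hdisj, ← hST, h]
  rcases Nat.eq_zero_or_pos (S \ T).card with h1 | h1
  · right
    have hsub : S ⊆ T := by
      rw [← Finset.sdiff_eq_empty_iff_subset]
      exact Finset.card_eq_zero.mp h1
    have h2 : (T \ S).card = 1 := by omega
    have := Finset.card_sdiff_add_card_eq_card hsub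
    omega
  · left
    have h2 : (T \ S).card = 0 := by omega
    have hsub : T ⊆ S := by
      rw [← Finset.sdiff_eq_empty_iff_subset]
      exact Finset.card_eq_zero.mp h2
    have h1' : (S \ T).card = 1 := by omega
    have := Finset.card_sdiff_add_card_eq_card hsub
    omega

lemma subset_of_symmDiff_card_one {α : Type*} [DecidableEq α] {S T : Finset α}
    (h : (symmDiff S T).card = 1) (hc : T.card + 1 = S.card) : T ⊆ S := by
  have hST : symmDiff S T = (S \ T) ∪ (T \ S) := by
    ext a; simp [symmDiff_def, Finset.mem_union, Finset.mem_sdiff]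
  have hdisj : Disjoint (S \ T) (T \ S) := Finset.sdiff_disjoint.mono_right Finset.sdiff_subset
  have hcard : (S \ T).card + (T \ S).card = 1 := by
    rw [← Finset.card_union_of_disjoint hdisj, ← hST, h]
  rcases Nat.eq_zero_or_pos (T \ S).card with h1 | h1
  · rw [← Finset.sdiff_eq_empty_iff_subset]
    exact Finset.card_eq_zero.mp h1
  · exfalso
    have h2 : (S \ T).card = 0 := by omega
    have hsub : S ⊆ T := by
      rw [← Finset.sdiff_eq_empty_iff_subset]
      exact Finset.card_eq_zero.mp h2
    have := Finset.card_le_card hsub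
    omega

lemma key_ineq {t d : ℝ} (ht : 1 ≤ t) (htd : 2 * t ≤ d) (k : ℕ) :
    d * (Real.sqrt (t / d)) ^ (k + 1) + t * (Real.sqrt (t / d)) ^ (k - 1)
      ≤ 2 * Real.sqrt (t * d) * (Real.sqrt (t / d)) ^ k := by
  have hd : 0 < d := by linarith
  have ht0 : 0 < t := by linarith
  set x := Real.sqrt (t / d) with hxdef
  have hx : 0 < x := Real.sqrt_pos.mpr (by positivity)
  have hx2 : x ^ 2 = t / d := Real.sq_sqrt (by positivity)
  have hdx : d * x = Real.sqrt (t * d) := by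
    have h1 : (d * x) ^ 2 = t * d := by
      rw [mul_pow, hx2]; field_simp
    rw [← h1, Real.sqrt_sq (by positivity)]
  have htx : Real.sqrt (t * d) * x = t := by
    rw [← hdx]
    have : d * x * x = d * x ^ 2 := by ring
    rw [this, hx2]; field_simp
  rcases k with _ | m
  · simp only [zero_add, pow_one, Nat.zero_sub, pow_zero, mul_one]
    have h1 : t ≤ Real.sqrt (t * d) := by
      nlinarith [Real.sq_sqrt (show (0:ℝ) ≤ t * d by positivity), Real.sqrt_nonneg (t * d),
        Real.sqrt_nonneg t]
    linarith [hdx]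
  · have h1 : m + 1 + 1 = m + 2 := rfl
    have h2 : m + 1 - 1 = m := rfl
    rw [h1, h2]
    refine le_of_eq ?_
    have hdx2 : d * x ^ 2 = t := by rw [hx2]; field_simp
    calc d * x ^ (m + 2) + t * x ^ m = (d * x ^ 2 + t) * x ^ m := by ring
    _ = 2 * t * x ^ m := by rw [hdx2]; ring
    _ = 2 * Real.sqrt (t * d) * x ^ (m + 1) := by
        rw [pow_succ]
        calc 2 * t * x ^ m = 2 * (Real.sqrt (t * d) * x) * x ^ m := by rw [htx]
        _ = 2 * Real.sqrt (t * d) * (x ^ m * x) := by ring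



theorem level_bound_eigenvalue (D d t : ℕ) (ht : 2 * t ≤ d)
    (U : Finset (Finset (Fin D))) (hU : ∀ S ∈ U, S.card ≤ t)
    (hdeg : ∀ a : ↥(↑U : Set (Finset (Fin D))),
      ((cube D).induce (↑U : Set (Finset (Fin D)))).degree a ≤ d) :
    lam1 ((cube D).induce (↑U : Set (Finset (Fin D)))) ≤
      2 * Real.sqrt ((t : ℝ) * (d : ℝ)) := by
  have hC : (0:ℝ) ≤ 2 * Real.sqrt ((t:ℝ) * (d:ℝ)) := by positivity
  refine Real.sSup_le ?_ hC
  intro μ hμ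
  simp only [Set.mem_setOf_eq] at hμ
  set Gr := (cube D).induce (↑U : Set (Finset (Fin D))) with hGr
  have hMnn : ∀ i j, (0:ℝ) ≤ (Gr.adjMatrix ℝ) i j := by
    intro i j
    rw [SimpleGraph.adjMatrix_apply]
    split_ifs <;> norm_num
  have hadj_iff : ∀ v u : ↥(↑U : Set (Finset (Fin D))),
      Gr.Adj v u ↔ (symmDiff (↑v : Finset (Fin D)) (↑u : Finset (Fin D))).card = 1 :=
    fun v u => Iff.rfl
  by_cases ht0 : t = 0
  · subst ht0
    refine eig_le_of_row_sum _ hMnn (fun _ => 1) (fun _ => one_pos) ?_ hμ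
    intro v
    have hzero : ∀ u, (Gr.adjMatrix ℝ) v u = 0 := by
      intro u
      rw [SimpleGraph.adjMatrix_apply, if_neg]
      rw [hadj_iff]
      have hv : (↑v : Finset (Fin D)) = ∅ :=
        Finset.card_eq_zero.mp (Nat.le_zero.mp (hU _ (Finset.mem_coe.mp v.2)))
      have hu : (↑u : Finset (Fin D)) = ∅ :=
        Finset.card_eq_zero.mp (Nat.le_zero.mp (hU _ (Finset.mem_coe.mp u.2)))
      rw [hv, hu]
      simp
    simp only [hzero, zero_mul, Finset.sum_const_zero, mul_one]
    exact hC
  · have ht1 : (1:ℝ) ≤ (t:ℝ) := by exact_mod_cast Nat.one_le_iff_ne_zero.mpr ht0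
    have htd : 2 * (t:ℝ) ≤ (d:ℝ) := by exact_mod_cast ht
    set x := Real.sqrt ((t:ℝ) / (d:ℝ)) with hxdef
    have hd0 : (0:ℝ) < d := by linarith
    have hx : 0 < x := Real.sqrt_pos.mpr (by positivity)
    refine eig_le_of_row_sum _ hMnn
      (fun v => x ^ (↑v : Finset (Fin D)).card) (fun v => pow_pos hx _) ?_ hμ
    intro v
    have hrw : (∑ u, (Gr.adjMatrix ℝ) v u * x ^ (↑u : Finset (Fin D)).card) =
        ∑ u ∈ Gr.neighborFinset v, x ^ (↑u : Finset (Fin D)).card := by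
      rw [show (∑ u, (Gr.adjMatrix ℝ) v u * x ^ (↑u : Finset (Fin D)).card) =
        (Gr.adjMatrix ℝ).mulVec (fun u => x ^ (↑u : Finset (Fin D)).card) v from rfl]
      rw [SimpleGraph.adjMatrix_mulVec_apply]
    rw [hrw]
    set k := (↑v : Finset (Fin D)).card with hk
    set N := Gr.neighborFinset v with hN
    set p : ↥(↑U : Set (Finset (Fin D))) → Prop :=
      fun u => (↑u : Finset (Fin D)).card = k + 1 with hp
    have hsplit := Finset.sum_filter_add_sum_filter_not N p
      (fun u => x ^ (↑u : Finset (Fin D)).card)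
    have hup : ∑ u ∈ N.filter p, x ^ (↑u : Finset (Fin D)).card ≤ (d:ℝ) * x ^ (k+1) := by
      have heach : ∀ u ∈ N.filter p, x ^ (↑u : Finset (Fin D)).card = x ^ (k+1) :=
        fun u hu => by rw [(Finset.mem_filter.mp hu).2]
      rw [Finset.sum_congr rfl heach, Finset.sum_const, nsmul_eq_mul]
      refine mul_le_mul_of_nonneg_right ?_ (by positivity)
      have h1 : (N.filter p).card ≤ N.card := Finset.card_filter_le _ _
      have h2 : N.card ≤ d := hdeg v
      exact_mod_cast h1.trans h2
    have hdowncase : ∀ u ∈ N.filter (fun u => ¬ p u),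
        (↑u : Finset (Fin D)).card + 1 = k ∧ (↑u : Finset (Fin D)) ⊆ (↑v : Finset (Fin D)) := by
      intro u hu
      obtain ⟨huN, hune⟩ := Finset.mem_filter.mp hu
      have hadj : (symmDiff (↑v : Finset (Fin D)) (↑u : Finset (Fin D))).card = 1 :=
        (hadj_iff v u).mp ((Gr.mem_neighborFinset v u).mp huN)
      rcases symmDiff_card_one hadj with hc | hc
      · exact ⟨hc, subset_of_symmDiff_card_one hadj hc⟩
      · exact absurd hc.symm hune
    have hdown : ∑ u ∈ N.filter (fun u => ¬ p u), x ^ (↑u : Finset (Fin D)).card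
        ≤ (t:ℝ) * x ^ (k-1) := by
      have heach : ∀ u ∈ N.filter (fun u => ¬ p u),
          x ^ (↑u : Finset (Fin D)).card = x ^ (k-1) := by
        intro u hu
        have := (hdowncase u hu).1
        congr 1
        omega
      rw [Finset.sum_congr rfl heach, Finset.sum_const, nsmul_eq_mul]
      refine mul_le_mul_of_nonneg_right ?_ (by positivity)
      have hinj : (N.filter (fun u => ¬ p u)).card ≤
          ((↑v : Finset (Fin D)).powersetCard (k-1)).card := by
        refine Finset.card_le_card_of_injOn
          (fun u : ↥(↑U : Set (Finset (Fin D))) => (u : Finset (Fin D))) ?_ ?_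
        · intro u hu
          rw [Finset.mem_coe, Finset.mem_powersetCard]
          refine ⟨(hdowncase u hu).2, ?_⟩
          have h1 := (hdowncase u hu).1
          show (↑u : Finset (Fin D)).card = k - 1
          omega
        · intro a _ b _ hab
          exact Subtype.ext hab
      have hpc : ((↑v : Finset (Fin D)).powersetCard (k-1)).card = k.choose (k-1) := by
        rw [Finset.card_powersetCard]
      have hkt : k ≤ t := hU _ (Finset.mem_coe.mp v.2)
      have hch : k.choose (k-1) ≤ t := by
        rcases Nat.eq_zero_or_pos k with h | h
        · simp [h]; omega
        · have h1 := Nat.choose_symm (show 1 ≤ k from h)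
          have h2 : k.choose 1 = k := Nat.choose_one_right k
          omega
      have : (N.filter (fun u => ¬ p u)).card ≤ t := by omega
      exact_mod_cast this
    calc ∑ u ∈ N, x ^ (↑u : Finset (Fin D)).card
        = (∑ u ∈ N.filter p, x ^ (↑u : Finset (Fin D)).card) +
          ∑ u ∈ N.filter (fun u => ¬ p u), x ^ (↑u : Finset (Fin D)).card := hsplit.symm
    _ ≤ (d:ℝ) * x ^ (k+1) + (t:ℝ) * x ^ (k-1) := add_le_add hup hdown
    _ ≤ 2 * Real.sqrt ((t:ℝ) * (d:ℝ)) * x ^ k := key_ineq ht1 htd k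
end

section
/- For d even, the Hamming ball H = H_d^{d/2−1} (the subgraph of Q_d induced by all subsets of [d] of size at most d/2 − 1) satisfies λ₁(H) = d − 2. -/
open SimpleGraph Finset Matrix

/-- card of symmDiff with a singleton, member case -/
lemma card_symmDiff_singleton_mem {d : ℕ} {S : Finset (Fin d)} {x : Fin d} (h : x ∈ S) :
    (symmDiff S {x}).card = S.card - 1 := by
  rw [symmDiff_def]
  have h1 : ({x} : Finset (Fin d)) \ S = ∅ := by simp [Finset.sdiff_eq_empty_iff_subset, h]
  rw [h1]
  show (S \ {x} ∪ ∅).card = _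
  rw [Finset.union_empty, Finset.sdiff_singleton_eq_erase, Finset.card_erase_of_mem h]

lemma card_symmDiff_singleton_not_mem {d : ℕ} {S : Finset (Fin d)} {x : Fin d} (h : x ∉ S) :
    (symmDiff S {x}).card = S.card + 1 := by
  rw [symmDiff_def]
  have h1 : S \ {x} = S := by simp [Finset.sdiff_eq_self_iff_disjoint, h]
  have h2 : ({x} : Finset (Fin d)) \ S = {x} := by simp [Finset.sdiff_eq_self_iff_disjoint, h]
  rw [h1, h2]
  show (S ∪ {x}).card = _
  rw [Finset.card_union_of_disjoint (by simp [h]), Finset.card_singleton]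

/-- Perron-type bound: if a symmetric nonnegative matrix has a positive eigenvector with
eigenvalue `lam`, then every eigenvalue has absolute value at most `lam`. -/
lemma abs_eigenvalue_le {V : Type*} [Fintype V] [DecidableEq V] (A : Matrix V V ℝ)
    (hsym : Aᵀ = A) (hnn : ∀ i j, 0 ≤ A i j) (v : V → ℝ) (hv : ∀ i, 0 < v i) (lam : ℝ)
    (hev : A.mulVec v = lam • v) (μ : ℝ) (w : V → ℝ) (hw : w ≠ 0)
    (hμ : A.mulVec w = μ • w) : |μ| ≤ lam := by
  classical
  set u : V → ℝ := fun i => |w i| with hu_def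
  have hu : ∀ i, |μ| * u i ≤ (A.mulVec u) i := by
    intro i
    have h1 : |(A.mulVec w) i| ≤ (A.mulVec u) i := by
      unfold Matrix.mulVec dotProduct
      calc |∑ j, A i j * w j| ≤ ∑ j, |A i j * w j| := Finset.abs_sum_le_sum_abs _ _
        _ = ∑ j, A i j * u j := by
            apply Finset.sum_congr rfl
            intro j _
            rw [abs_mul, abs_of_nonneg (hnn i j)]
    have h2 : |(A.mulVec w) i| = |μ| * u i := by
      rw [hμ]; simp [abs_mul, hu_def]
    linarith
  obtain ⟨i0, hi0⟩ : ∃ i, w i ≠ 0 := by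
    by_contra h
    push_neg at h
    exact hw (funext h)
  have hSpos : 0 < ∑ i, v i * u i := by
    apply Finset.sum_pos'
    · intro i _
      exact mul_nonneg (hv i).le (abs_nonneg _)
    · exact ⟨i0, Finset.mem_univ _, mul_pos (hv i0) (abs_pos.mpr hi0)⟩
  have key : ∑ i, v i * (A.mulVec u) i = lam * ∑ i, v i * u i := by
    have hAsymm : ∀ i j, A i j = A j i := by
      intro i j
      conv_lhs => rw [← hsym]
      rfl
    calc ∑ i, v i * (A.mulVec u) i = ∑ i, ∑ j, v i * (A i j * u j) := by
          apply Finset.sum_congr rfl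
          intro i _
          rw [Matrix.mulVec, dotProduct, Finset.mul_sum]
      _ = ∑ j, ∑ i, v i * (A i j * u j) := Finset.sum_comm
      _ = ∑ j, (A.mulVec v) j * u j := by
          apply Finset.sum_congr rfl
          intro j _
          rw [Matrix.mulVec, dotProduct, Finset.sum_mul]
          apply Finset.sum_congr rfl
          intro i _
          rw [hAsymm j i]; ring
      _ = ∑ j, lam * (v j * u j) := by
          apply Finset.sum_congr rfl
          intro j _
          rw [hev]; simp; ring
      _ = lam * ∑ i, v i * u i := by rw [Finset.mul_sum]
  have hb : |μ| * ∑ i, v i * u i ≤ lam * ∑ i, v i * u i := by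
    rw [← key, Finset.mul_sum]
    apply Finset.sum_le_sum
    intro i _
    calc |μ| * (v i * u i) = v i * (|μ| * u i) := by ring
      _ ≤ v i * (A.mulVec u) i := by
          apply mul_le_mul_of_nonneg_left (hu i) (hv i).le
  exact le_of_mul_le_mul_right hb hSpos

/-- The key combinatorial computation: the vector `S ↦ d - 2|S|` is an eigenvector with
eigenvalue `d - 2` on the Hamming ball. -/
lemma ball_mulVec (d : ℕ) (hd : Even d) (h2 : 2 ≤ d) :
    (((cube d).induce {S : Finset (Fin d) | S.card ≤ d / 2 - 1}).adjMatrix ℝ).mulVec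
      (fun S => (d : ℝ) - 2 * ((S : Finset (Fin d)).card : ℝ))
    = ((d : ℝ) - 2) • (fun S : {S : Finset (Fin d) // S.card ≤ d / 2 - 1} =>
        (d : ℝ) - 2 * ((S : Finset (Fin d)).card : ℝ)) := by
  classical
  set k := d / 2 - 1 with hk
  have hkd : 2 * (k + 1) = d := by
    obtain ⟨m, hm⟩ := hd
    omega
  funext ⟨S, hS⟩
  have hSk : S.card ≤ k := hS
  simp only [Pi.smul_apply, smul_eq_mul]
  -- compute the mulVec entry
  have step0 : (((cube d).induce {S : Finset (Fin d) | S.card ≤ d / 2 - 1}).adjMatrix ℝ).mulVec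
      (fun S => (d : ℝ) - 2 * ((S : Finset (Fin d)).card : ℝ)) ⟨S, hS⟩
      = ∑ T : {S : Finset (Fin d) // S.card ≤ k},
          (if (symmDiff S (T : Finset (Fin d))).card = 1 then (1:ℝ) else 0)
            * ((d : ℝ) - 2 * ((T : Finset (Fin d)).card : ℝ)) := by
    rw [Matrix.mulVec, dotProduct]
    apply Finset.sum_congr rfl
    intro T _
    congr 1
  rw [step0]
  have step1 : ∑ T : {S : Finset (Fin d) // S.card ≤ k},
          (if (symmDiff S (T : Finset (Fin d))).card = 1 then (1:ℝ) else 0)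
            * ((d : ℝ) - 2 * ((T : Finset (Fin d)).card : ℝ))
      = ∑ T ∈ Finset.univ.filter (fun T : Finset (Fin d) => T.card ≤ k),
          (if (symmDiff S T).card = 1 then (1:ℝ) else 0) * ((d : ℝ) - 2 * (T.card : ℝ)) := by
    exact (Finset.sum_subtype (p := fun T : Finset (Fin d) => T.card ≤ k)
      (Finset.univ.filter (fun T : Finset (Fin d) => T.card ≤ k))
      (fun T => by simp) (fun T => (if (symmDiff S T).card = 1 then (1:ℝ) else 0)
        * ((d : ℝ) - 2 * (T.card : ℝ)))).symm
  rw [step1, Finset.sum_filter]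
  have step2 : ∀ T : Finset (Fin d),
      (if T.card ≤ k then
        (if (symmDiff S T).card = 1 then (1:ℝ) else 0) * ((d : ℝ) - 2 * (T.card : ℝ)) else 0)
      = (if (symmDiff S T).card = 1 then
          (if T.card ≤ k then ((d : ℝ) - 2 * (T.card : ℝ)) else 0) else 0) := by
    intro T
    split_ifs <;> ring
  rw [Finset.sum_congr rfl (fun T _ => step2 T), ← Finset.sum_filter]
  have himage : Finset.univ.filter (fun T : Finset (Fin d) => (symmDiff S T).card = 1)
      = Finset.image (fun x : Fin d => symmDiff S {x}) Finset.univ := by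
    ext T
    simp only [Finset.mem_filter, Finset.mem_univ, true_and, Finset.mem_image,
      Finset.card_eq_one]
    constructor
    · rintro ⟨a, ha⟩
      exact ⟨a, by rw [← ha, symmDiff_symmDiff_cancel_left]⟩
    · rintro ⟨a, ha⟩
      exact ⟨a, by rw [← ha, symmDiff_symmDiff_cancel_left]⟩
  rw [himage, Finset.sum_image (fun x _ y _ h => by
    have := symmDiff_right_injective S h
    exact Finset.singleton_injective this)]
  rw [← Finset.sum_add_sum_compl S]
  have hcard1 : 1 ≤ S.card → ((S.card - 1 : ℕ) : ℝ) = (S.card : ℝ) - 1 := fun h => by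
    push_cast [Nat.cast_sub h]; ring
  have e1 : ∑ x ∈ S, (if (symmDiff S {x}).card ≤ k then
        ((d : ℝ) - 2 * ((symmDiff S {x}).card : ℝ)) else 0)
      = (S.card : ℝ) * ((d : ℝ) - 2 * (S.card : ℝ) + 2) := by
    rw [Finset.sum_congr rfl (fun x hx => ?_), Finset.sum_const, nsmul_eq_mul]
    rw [card_symmDiff_singleton_mem hx]
    have h1S : 1 ≤ S.card := Finset.card_pos.mpr ⟨x, hx⟩
    rw [if_pos (le_trans (Nat.sub_le _ _) hSk), hcard1 h1S]
    ring
  have e2 : ∑ x ∈ Sᶜ, (if (symmDiff S {x}).card ≤ k then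
        ((d : ℝ) - 2 * ((symmDiff S {x}).card : ℝ)) else 0)
      = ((d : ℝ) - (S.card : ℝ)) * ((d : ℝ) - 2 * (S.card : ℝ) - 2) := by
    have hval : ∀ x ∈ Sᶜ, (if (symmDiff S {x}).card ≤ k then
        ((d : ℝ) - 2 * ((symmDiff S {x}).card : ℝ)) else 0)
        = (d : ℝ) - 2 * (S.card : ℝ) - 2 := by
      intro x hx
      rw [Finset.mem_compl] at hx
      rw [card_symmDiff_singleton_not_mem hx]
      by_cases hle : S.card + 1 ≤ k
      · rw [if_pos hle]; push_cast; ring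
      · have hSck : S.card = k := by omega
        rw [if_neg hle]
        have : ((S.card : ℝ) + 1) * 2 = (d : ℝ) := by
          rw [hSck]
          have : ((2 * (k + 1) : ℕ) : ℝ) = (d : ℝ) := by rw [hkd]
          push_cast at this
          linarith
        linarith
    rw [Finset.sum_congr rfl hval, Finset.sum_const, nsmul_eq_mul]
    have hSd : S.card ≤ d := by
      have := Finset.card_le_univ S
      simpa using this
    have hcompl : (Sᶜ.card : ℝ) = (d : ℝ) - (S.card : ℝ) := by
      rw [Finset.card_compl, Fintype.card_fin, Nat.cast_sub hSd]
    rw [hcompl]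
  rw [e1, e2]
  ring

theorem hammingBall_half_minus_one_eigenvalue (d : ℕ) (hd : Even d) (h2 : 2 ≤ d) :
    lam1 ((cube d).induce {S : Finset (Fin d) | S.card ≤ d / 2 - 1}) = (d : ℝ) - 2 := by
  classical
  set G := (cube d).induce {S : Finset (Fin d) | S.card ≤ d / 2 - 1} with hG
  set A := G.adjMatrix ℝ with hA
  set v : {S : Finset (Fin d) // S.card ≤ d / 2 - 1} → ℝ :=
    fun S => (d : ℝ) - 2 * ((S : Finset (Fin d)).card : ℝ) with hv
  have hvpos : ∀ S, 0 < v S := by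
    rintro ⟨S, hS⟩
    have hS' : S.card ≤ d / 2 - 1 := hS
    have h2S : 2 * S.card ≤ d - 2 := by
      obtain ⟨m, hm⟩ := hd
      omega
    have : ((2 * S.card : ℕ) : ℝ) ≤ ((d - 2 : ℕ) : ℝ) := Nat.cast_le.mpr h2S
    have hd2 : ((d - 2 : ℕ) : ℝ) = (d : ℝ) - 2 := by
      rw [Nat.cast_sub h2]; norm_num
    simp only [hv]
    push_cast at this ⊢
    rw [hd2] at this
    linarith
  have hev : A.mulVec v = ((d : ℝ) - 2) • v := ball_mulVec d hd h2
  have hv0 : v ≠ 0 := by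
    intro h
    have h0 : (∅ : Finset (Fin d)).card ≤ d / 2 - 1 := by simp
    have := congrFun h ⟨∅, h0⟩
    have := hvpos ⟨∅, h0⟩
    rw [‹v = 0›] at this
    simp at this
  have heig : Module.End.HasEigenvalue (Matrix.toLin' A) ((d : ℝ) - 2) := by
    apply Module.End.hasEigenvalue_of_hasEigenvector (x := v)
    refine ⟨?_, hv0⟩
    rw [Module.End.mem_eigenspace_iff]
    exact (Matrix.toLin'_apply A v).trans (by rw [hev])
  have hub : ∀ μ ∈ {μ : ℝ | Module.End.HasEigenvalue (Matrix.toLin' A) μ}, μ ≤ (d : ℝ) - 2 := by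
    intro μ hμ
    obtain ⟨w, hw⟩ := hμ.exists_hasEigenvector
    have hw1 : A.mulVec w = μ • w :=
      (Matrix.toLin'_apply A w).symm.trans hw.apply_eq_smul
    have habs : |μ| ≤ (d : ℝ) - 2 := by
      apply abs_eigenvalue_le A (SimpleGraph.transpose_adjMatrix G) ?_ v hvpos _ hev μ w
        hw.right hw1
      intro i j
      rw [hA, SimpleGraph.adjMatrix_apply]
      split <;> norm_num
    exact le_trans (le_abs_self μ) habs
  unfold lam1
  apply le_antisymm
  · exact csSup_le ⟨_, heig⟩ hub
  · exact le_csSup ⟨(d : ℝ) - 2, hub⟩ heig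
end
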